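/- arXiv:1309.6664 — 5 statements merged into one kernel-verified Lean document; each statement's English description precedes it below -/
import Mathlib

section
/- De Gua's rule: let P = Σ aₖXᵏ be a real polynomial and let i > j be indices with aᵢ ≠ 0, aⱼ ≠ 0 and aₖ = 0 for all k with j < k < i, and set r := i − j − 1 ≥ 1 (a block of r consecutive missing terms). Then the number of non-real complex roots of P, counted with multiplicity, is at least r if r is even; at least r + 1 if r is odd and aᵢ·aⱼ > 0; and at least r − 1 if r is odd and aᵢ·aⱼ < 0. -/
open Polynomial

/-- Number of sign changes in a list of reals, after discarding zero entries:
the number of consecutive pairs with negative product. -/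
noncomputable def signChanges (l : List ℝ) : ℕ :=
  let l' := l.filter (fun x => decide (x ≠ 0))
  (l'.zip l'.tail).countP (fun p => decide (p.1 * p.2 < 0))

/-- `v(P)`: number of sign changes in the sequence of nonzero coefficients of `P`,
listed in order of increasing degree. -/
noncomputable def v (P : Polynomial ℝ) : ℕ :=
  signChanges (List.ofFn fun i : Fin (P.natDegree + 1) => P.coeff i)

/-- `c(P) := v(P(-X))`: the number of sign permanences of `P` (minimization convention). -/
noncomputable def c (P : Polynomial ℝ) : ℕ :=
  v (P.comp (-Polynomial.X))

/-- `z⁺(P)`: number of positive real roots of `P`, with multiplicity. -/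
noncomputable def zpos (P : Polynomial ℝ) : ℕ :=
  (P.roots.filter (fun x => 0 < x)).card

/-- `z⁻(P)`: number of negative real roots of `P`, with multiplicity. -/
noncomputable def zneg (P : Polynomial ℝ) : ℕ :=
  (P.roots.filter (fun x => x < 0)).card

section DeGuaHelpers

-- counting lemma at multiset level
lemma my_multiset_card_le {A B : Multiset ℝ} {b : ℕ}
    (hcount : ∀ x ∈ A, A.count x ≤ B.count x + 1)
    (hfin : A.toFinset.card ≤ (B.toFinset \ A.toFinset).card + b) :
    Multiset.card A ≤ Multiset.card B + b := by
  classical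
  calc Multiset.card A = ∑ x ∈ A.toFinset, A.count x :=
        (Multiset.toFinset_sum_count_eq _).symm
    _ = ∑ x ∈ A.toFinset, (A.count x - 1 + 1) :=
        (Finset.sum_congr rfl fun x hx => by
          have : 1 ≤ A.count x := Multiset.count_pos.2 (Multiset.mem_toFinset.1 hx)
          omega).symm
    _ = (∑ x ∈ A.toFinset, (A.count x - 1)) + A.toFinset.card := by
        rw [Finset.sum_add_distrib, Finset.card_eq_sum_ones]
    _ ≤ (∑ x ∈ A.toFinset, B.count x) + ((B.toFinset \ A.toFinset).card + b) :=
        add_le_add (Finset.sum_le_sum fun x hx => by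
          have := hcount x (Multiset.mem_toFinset.1 hx); omega) hfin
    _ ≤ (∑ x ∈ A.toFinset, B.count x) +
          ((∑ x ∈ B.toFinset \ A.toFinset, B.count x) + b) := by
        refine add_le_add_right (add_le_add_left ((Finset.card_eq_sum_ones _).trans_le ?_) _) _
        refine Finset.sum_le_sum fun x hx => ?_
        rw [Nat.succ_le_iff, Multiset.count_pos, ← Multiset.mem_toFinset]
        exact (Finset.mem_sdiff.1 hx).1
    _ = Multiset.card B + b := by
        rw [← add_assoc, ← Finset.sum_union Finset.disjoint_sdiff,
          Finset.union_sdiff_self_eq_union, ← Multiset.toFinset_sum_count_eq,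
          ← Finset.sum_subset Finset.subset_union_right]
        intro x _ hx₂
        simpa only [Multiset.mem_toFinset, Multiset.count_eq_zero] using hx₂

-- Rolle for polynomials
lemma my_poly_rolle (p : ℝ[X]) {x y : ℝ} (hxy : x < y) (hx : p.eval x = 0) (hy : p.eval y = 0) :
    ∃ z, x < z ∧ z < y ∧ (derivative p).eval z = 0 := by
  obtain ⟨z, hz, hz'⟩ := exists_deriv_eq_zero hxy p.continuousOn (hx.trans hy.symm)
  exact ⟨z, hz.1, hz.2, by rwa [← Polynomial.deriv]⟩

-- strict mono consequence
lemma my_eval_lt_of_deriv_pos (p : ℝ[X]) {a b : ℝ} (hab : a < b)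
    (h : ∀ x ∈ Set.Ioo a b, 0 < (derivative p).eval x) : p.eval a < p.eval b := by
  have hmono : StrictMonoOn (fun x => p.eval x) (Set.Icc a b) := by
    refine strictMonoOn_of_deriv_pos (convex_Icc a b) p.continuousOn ?_
    intro x hx
    rw [interior_Icc] at hx
    rw [Polynomial.deriv]
    exact h x hx
  exact hmono (Set.left_mem_Icc.2 hab.le) (Set.right_mem_Icc.2 hab.le) hab

lemma my_eval_gt_of_deriv_neg (p : ℝ[X]) {a b : ℝ} (hab : a < b)
    (h : ∀ x ∈ Set.Ioo a b, (derivative p).eval x < 0) : p.eval b < p.eval a := by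
  have hmono : StrictAntiOn (fun x => p.eval x) (Set.Icc a b) := by
    refine strictAntiOn_of_deriv_neg (convex_Icc a b) p.continuousOn ?_
    intro x hx
    rw [interior_Icc] at hx
    rw [Polynomial.deriv]
    exact h x hx
  exact hmono (Set.left_mem_Icc.2 hab.le) (Set.right_mem_Icc.2 hab.le) hab

-- constant sign on interval without roots
lemma my_const_sign (p : ℝ[X]) {a b : ℝ} (h : ∀ x ∈ Set.Ioo a b, p.eval x ≠ 0) :
    (∀ x ∈ Set.Ioo a b, 0 < p.eval x) ∨ (∀ x ∈ Set.Ioo a b, p.eval x < 0) := by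
  by_contra hcon
  push_neg at hcon
  obtain ⟨⟨x₁, hx₁, hx₁'⟩, ⟨x₂, hx₂, hx₂'⟩⟩ := hcon
  have h₁ : p.eval x₁ < 0 := lt_of_le_of_ne hx₁' (h x₁ hx₁)
  have h₂ : 0 < p.eval x₂ := lt_of_le_of_ne hx₂' (Ne.symm (h x₂ hx₂))
  rcases le_total x₁ x₂ with hle | hle
  · obtain ⟨z, hz, hz'⟩ := intermediate_value_Icc hle p.continuousOn
      (Set.mem_Icc.2 ⟨h₁.le, h₂.le⟩)
    exact h z (⟨lt_of_lt_of_le hx₁.1 hz.1, lt_of_le_of_lt hz.2 hx₂.2⟩) hz'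
  · obtain ⟨z, hz, hz'⟩ := intermediate_value_Icc' hle p.continuousOn
      (Set.mem_Icc.2 ⟨h₁.le, h₂.le⟩)
    exact h z (⟨lt_of_lt_of_le hx₂.1 hz.1, lt_of_le_of_lt hz.2 hx₁.2⟩) hz'

lemma my_sign_near_zero (R : ℝ[X]) (hR : R.eval 0 ≠ 0) :
    ∃ δ > (0:ℝ), ∀ x : ℝ, |x| < δ → 0 < R.eval x * R.eval 0 := by
  have hc : ContinuousAt (fun x => R.eval x * R.eval 0) 0 :=
    (R.continuous.mul continuous_const).continuousAt
  have h0 : 0 < R.eval 0 * R.eval 0 := mul_self_pos.2 hR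
  have hev : ∀ᶠ x in nhds (0:ℝ), 0 < R.eval x * R.eval 0 :=
    hc.eventually (eventually_gt_nhds h0)
  rw [Metric.eventually_nhds_iff] at hev
  obtain ⟨δ, hδ, h⟩ := hev
  exact ⟨δ, hδ, fun x hx => h (by simpa [Real.dist_eq] using hx)⟩

lemma my_exists_deriv_root_pos (Q R : ℝ[X]) (r : ℕ) (hfac : derivative Q = X ^ r * R)
    (hsgn : 0 < Q.eval 0 * R.eval 0) {y : ℝ} (hy : 0 < y) (hroot : Q.eval y = 0) :
    ∃ z, 0 < z ∧ z < y ∧ (derivative Q).eval z = 0 := by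
  by_contra hcon
  push_neg at hcon
  have hne : ∀ x ∈ Set.Ioo (0:ℝ) y, (derivative Q).eval x ≠ 0 :=
    fun x hx => hcon x hx.1 hx.2
  have hR0 : R.eval 0 ≠ 0 := by
    intro h; rw [h, mul_zero] at hsgn; exact lt_irrefl _ hsgn
  obtain ⟨δ, hδ, hδ'⟩ := my_sign_near_zero R hR0
  set x₀ : ℝ := min δ y / 2 with hx₀
  have hx₀pos : 0 < x₀ := by positivity
  have hx₀y : x₀ < y := by
    have : min δ y ≤ y := min_le_right _ _
    simp only [hx₀]; linarith
  have hx₀δ : |x₀| < δ := by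
    have h1 : min δ y ≤ δ := min_le_left _ _
    rw [abs_of_pos hx₀pos]; simp only [hx₀]; linarith
  have hx₀mem : x₀ ∈ Set.Ioo (0:ℝ) y := ⟨hx₀pos, hx₀y⟩
  have hQ'x₀ : (derivative Q).eval x₀ = x₀ ^ r * R.eval x₀ := by
    rw [hfac]; simp
  have hpow : 0 < x₀ ^ r := pow_pos hx₀pos r
  have hRx₀ := hδ' x₀ hx₀δ
  have hsign_x₀ : 0 < (derivative Q).eval x₀ * R.eval 0 := by
    rw [hQ'x₀, mul_assoc]; exact mul_pos hpow hRx₀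
  rcases my_const_sign (derivative Q) hne with hp | hn
  · have hQ'pos := hp x₀ hx₀mem
    have hR0pos : 0 < R.eval 0 := by nlinarith
    have hQ0pos : 0 < Q.eval 0 := by nlinarith
    have := my_eval_lt_of_deriv_pos Q hy hp
    rw [hroot] at this
    linarith
  · have hQ'neg := hn x₀ hx₀mem
    have hR0neg : R.eval 0 < 0 := by nlinarith
    have hQ0neg : Q.eval 0 < 0 := by nlinarith
    have := my_eval_gt_of_deriv_neg Q hy hn
    rw [hroot] at this
    linarith

lemma my_exists_deriv_root_neg (Q R : ℝ[X]) (r : ℕ) (hfac : derivative Q = X ^ r * R)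
    (hsgn : Q.eval 0 * ((-1:ℝ) ^ r * R.eval 0) < 0) {y : ℝ} (hy : y < 0) (hroot : Q.eval y = 0) :
    ∃ z, y < z ∧ z < 0 ∧ (derivative Q).eval z = 0 := by
  by_contra hcon
  push_neg at hcon
  have hne : ∀ x ∈ Set.Ioo y (0:ℝ), (derivative Q).eval x ≠ 0 :=
    fun x hx => hcon x hx.1 hx.2
  have hR0 : R.eval 0 ≠ 0 := by
    intro h; rw [h, mul_zero, mul_zero] at hsgn; exact lt_irrefl _ hsgn
  obtain ⟨δ, hδ, hδ'⟩ := my_sign_near_zero R hR0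
  set x₀ : ℝ := -(min δ (-y) / 2) with hx₀
  have hx₀neg : x₀ < 0 := by
    have h1 : 0 < min δ (-y) := lt_min hδ (by linarith)
    simp only [hx₀]; linarith
  have hx₀y : y < x₀ := by
    have : min δ (-y) ≤ -y := min_le_right _ _
    simp only [hx₀]; linarith
  have hx₀δ : |x₀| < δ := by
    have h1 : min δ (-y) ≤ δ := min_le_left _ _
    have h2 : 0 < min δ (-y) := lt_min hδ (by linarith)
    rw [abs_of_neg hx₀neg]; simp only [hx₀]; linarith
  have hx₀mem : x₀ ∈ Set.Ioo y (0:ℝ) := ⟨hx₀y, hx₀neg⟩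
  clear hx₀
  clear_value x₀
  have hQ'x₀ : (derivative Q).eval x₀ = x₀ ^ r * R.eval x₀ := by
    rw [hfac]; simp
  have hRx₀ := hδ' x₀ hx₀δ
  have hkey : 0 < (derivative Q).eval x₀ * ((-1:ℝ) ^ r * R.eval 0) := by
    obtain ⟨u, hu⟩ : ∃ u : ℝ, u = (-1:ℝ) ^ r := ⟨_, rfl⟩
    have h1 : (derivative Q).eval x₀ * ((-1:ℝ) ^ r * R.eval 0)
        = (-x₀) ^ r * (R.eval x₀ * R.eval 0) := by
      rw [hQ'x₀, neg_pow x₀ r, ← hu]; ring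
    rw [h1]
    exact mul_pos (pow_pos (by linarith) r) hRx₀
  rcases my_const_sign (derivative Q) hne with hp | hn
  · have hQ'pos := hp x₀ hx₀mem
    have hspos : 0 < (-1:ℝ) ^ r * R.eval 0 := by nlinarith
    have hQ0neg : Q.eval 0 < 0 := by nlinarith
    have := my_eval_lt_of_deriv_pos Q hy hp
    rw [hroot] at this
    linarith
  · have hQ'neg := hn x₀ hx₀mem
    have hsneg : (-1:ℝ) ^ r * R.eval 0 < 0 := by nlinarith
    have hQ0pos : 0 < Q.eval 0 := by nlinarith
    have := my_eval_gt_of_deriv_neg Q hy hn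
    rw [hroot] at this
    linarith

lemma my_hcount (p : ℝ[X]) (t : ℝ → Prop) [DecidablePred t] :
    ∀ x ∈ p.roots.filter t,
      (p.roots.filter t).count x ≤ ((derivative p).roots.filter t).count x + 1 := by
  intro x hx
  have htx : t x := (Multiset.mem_filter.1 hx).2
  rw [Multiset.count_filter, Multiset.count_filter, if_pos htx, if_pos htx,
    count_roots, count_roots]
  have := p.rootMultiplicity_sub_one_le_derivative_rootMultiplicity x
  omega

lemma my_finA (p : ℝ[X]) (hp : p ≠ 0) (hp' : derivative p ≠ 0) (t : ℝ → Prop) [DecidablePred t]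
    (ht : ∀ ⦃x z y : ℝ⦄, t x → t y → x < z → z < y → t z) :
    (p.roots.filter t).toFinset.card ≤
      (((derivative p).roots.filter t).toFinset \ (p.roots.filter t).toFinset).card + 1 := by
  refine Finset.card_le_diff_of_interleaved fun x hx y hy hxy _ => ?_
  rw [Multiset.mem_toFinset, Multiset.mem_filter, mem_roots hp] at hx hy
  obtain ⟨z, hz1, hz2, hz3⟩ := my_poly_rolle p hxy hx.1 hy.1
  refine ⟨z, ?_, hz1, hz2⟩
  rw [Multiset.mem_toFinset, Multiset.mem_filter, mem_roots hp']
  exact ⟨hz3, ht hx.2 hy.2 hz1 hz2⟩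

lemma my_stepA (p : ℝ[X]) (hp' : derivative p ≠ 0) (t : ℝ → Prop) [DecidablePred t]
    (ht : ∀ ⦃x z y : ℝ⦄, t x → t y → x < z → z < y → t z) :
    (p.roots.filter t).card ≤ ((derivative p).roots.filter t).card + 1 := by
  have hp : p ≠ 0 := fun h => hp' (by rw [h, derivative_zero])
  exact my_multiset_card_le (my_hcount p t) (my_finA p hp hp' t ht)

lemma my_stepB_pos (p : ℝ[X]) (hp' : derivative p ≠ 0)
    (hz : ∀ y : ℝ, 0 < y → p.eval y = 0 → ∃ z, 0 < z ∧ z < y ∧ (derivative p).eval z = 0) :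
    (p.roots.filter fun x => 0 < x).card ≤ ((derivative p).roots.filter fun x => 0 < x).card := by
  classical
  have hp : p ≠ 0 := fun h => hp' (by rw [h, derivative_zero])
  set s := (p.roots.filter fun x => 0 < x).toFinset with hs
  set d := ((derivative p).roots.filter fun x => 0 < x).toFinset with hd
  have hmem_s : ∀ x, x ∈ s ↔ (p.eval x = 0 ∧ 0 < x) := by
    intro x
    rw [hs, Multiset.mem_toFinset, Multiset.mem_filter, mem_roots hp]
    exact Iff.rfl
  have hmem_d : ∀ x, x ∈ d ↔ ((derivative p).eval x = 0 ∧ 0 < x) := by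
    intro x
    rw [hd, Multiset.mem_toFinset, Multiset.mem_filter, mem_roots hp']
    exact Iff.rfl
  have h0s : (0:ℝ) ∉ s := fun h => lt_irrefl 0 ((hmem_s 0).1 h).2
  have h0d : (0:ℝ) ∉ d := fun h => lt_irrefl 0 ((hmem_d 0).1 h).2
  have hfin : (insert (0:ℝ) s).card ≤ (d \ insert (0:ℝ) s).card + 1 := by
    refine Finset.card_le_diff_of_interleaved fun x hx y hy hxy _ => ?_
    rw [Finset.mem_insert] at hx hy
    have hy' : y ∈ s := by
      rcases hy with rfl | hy
      · rcases hx with rfl | hx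
        · exact absurd hxy (lt_irrefl 0)
        · exact absurd hxy (not_lt.2 (((hmem_s x).1 hx).2).le)
      · exact hy
    obtain ⟨hyr, hypos⟩ := (hmem_s y).1 hy'
    rcases hx with rfl | hx
    · obtain ⟨z, hz1, hz2, hz3⟩ := hz y hypos hyr
      exact ⟨z, (hmem_d z).2 ⟨hz3, hz1⟩, hz1, hz2⟩
    · obtain ⟨hxr, hxpos⟩ := (hmem_s x).1 hx
      obtain ⟨z, hz1, hz2, hz3⟩ := my_poly_rolle p hxy hxr hyr
      exact ⟨z, (hmem_d z).2 ⟨hz3, hxpos.trans hz1⟩, hz1, hz2⟩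
  have hdiff : d \ insert (0:ℝ) s = d \ s := by
    rw [Finset.sdiff_insert]
    exact Finset.erase_eq_of_notMem (fun h => h0d (Finset.mem_sdiff.1 h).1)
  rw [hdiff, Finset.card_insert_of_notMem h0s] at hfin
  refine my_multiset_card_le (b := 0) (my_hcount p _) ?_
  rw [← hs, ← hd]
  omega

lemma my_stepB_neg (p : ℝ[X]) (hp' : derivative p ≠ 0)
    (hz : ∀ y : ℝ, y < 0 → p.eval y = 0 → ∃ z, y < z ∧ z < 0 ∧ (derivative p).eval z = 0) :
    (p.roots.filter fun x => x < 0).card ≤ ((derivative p).roots.filter fun x => x < 0).card := by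
  classical
  have hp : p ≠ 0 := fun h => hp' (by rw [h, derivative_zero])
  set s := (p.roots.filter fun x => x < 0).toFinset with hs
  set d := ((derivative p).roots.filter fun x => x < 0).toFinset with hd
  have hmem_s : ∀ x, x ∈ s ↔ (p.eval x = 0 ∧ x < 0) := by
    intro x
    rw [hs, Multiset.mem_toFinset, Multiset.mem_filter, mem_roots hp]
    exact Iff.rfl
  have hmem_d : ∀ x, x ∈ d ↔ ((derivative p).eval x = 0 ∧ x < 0) := by
    intro x
    rw [hd, Multiset.mem_toFinset, Multiset.mem_filter, mem_roots hp']
    exact Iff.rfl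
  have h0s : (0:ℝ) ∉ s := fun h => lt_irrefl 0 ((hmem_s 0).1 h).2
  have h0d : (0:ℝ) ∉ d := fun h => lt_irrefl 0 ((hmem_d 0).1 h).2
  have hfin : (insert (0:ℝ) s).card ≤ (d \ insert (0:ℝ) s).card + 1 := by
    refine Finset.card_le_diff_of_interleaved fun x hx y hy hxy _ => ?_
    rw [Finset.mem_insert] at hx hy
    have hx' : x ∈ s := by
      rcases hx with rfl | hx
      · rcases hy with rfl | hy
        · exact absurd hxy (lt_irrefl 0)
        · exact absurd hxy (not_lt.2 (((hmem_s y).1 hy).2).le)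
      · exact hx
    obtain ⟨hxr, hxneg⟩ := (hmem_s x).1 hx'
    rcases hy with rfl | hy
    · obtain ⟨z, hz1, hz2, hz3⟩ := hz x hxneg hxr
      exact ⟨z, (hmem_d z).2 ⟨hz3, hz2⟩, hz1, hz2⟩
    · obtain ⟨hyr, hyneg⟩ := (hmem_s y).1 hy
      obtain ⟨z, hz1, hz2, hz3⟩ := my_poly_rolle p hxy hxr hyr
      exact ⟨z, (hmem_d z).2 ⟨hz3, hz2.trans hyneg⟩, hz1, hz2⟩
  have hdiff : d \ insert (0:ℝ) s = d \ s := by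
    rw [Finset.sdiff_insert]
    exact Finset.erase_eq_of_notMem (fun h => h0d (Finset.mem_sdiff.1 h).1)
  rw [hdiff, Finset.card_insert_of_notMem h0s] at hfin
  refine my_multiset_card_le (b := 0) (my_hcount p _) ?_
  rw [← hs, ← hd]
  omega

lemma my_core (Q : ℝ[X]) (r : ℕ) (h0 : Q.coeff 0 ≠ 0) (hc : Q.coeff (r + 1) ≠ 0)
    (hmiss : ∀ k, 1 ≤ k → k ≤ r → Q.coeff k = 0) (b : ℕ)
    (hb : (Q.roots.filter fun x => 0 < x).card + (Q.roots.filter fun x => x < 0).card ≤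
      ((derivative Q).roots.filter fun x => 0 < x).card +
      ((derivative Q).roots.filter fun x => x < 0).card + b) :
    Multiset.card Q.roots + r + 1 ≤ Q.natDegree + b := by
  classical
  have hQ : Q ≠ 0 := fun h => h0 (by rw [h, coeff_zero])
  have hQ'r : (derivative Q).coeff r = Q.coeff (r + 1) * (r + 1) := coeff_derivative Q r
  have hQ' : derivative Q ≠ 0 := fun h => by
    rw [h, coeff_zero] at hQ'r
    exact hc (by
      have : (r + 1 : ℝ) ≠ 0 := by positivity
      field_simp at hQ'r
      exact (mul_eq_zero.1 hQ'r.symm).resolve_right this)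
  -- all roots of Q are nonzero
  have hnz : ∀ x ∈ Q.roots, x ≠ 0 := by
    intro x hx hx0
    subst hx0
    have : Q.eval 0 = 0 := (mem_roots hQ).1 hx
    rw [← coeff_zero_eq_eval_zero] at this
    exact h0 this
  -- split card of Q.roots
  have hsplit : (Q.roots.filter fun x => 0 < x).card + (Q.roots.filter fun x => x < 0).card =
      Multiset.card Q.roots := by
    have h1 : (Q.roots.filter fun x => ¬ 0 < x) = Q.roots.filter fun x => x < 0 :=
      Multiset.filter_congr (fun x hx => by
        have := hnz x hx
        constructor
        · intro h; cases lt_or_gt_of_ne this with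
          | inl h' => exact h'
          | inr h' => exact absurd h' h
        · intro h; exact not_lt.2 h.le)
    rw [← h1, ← Multiset.card_add, Multiset.filter_add_not]
  -- multiplicity of 0 as root of Q'
  have hdvd : (X : ℝ[X]) ^ r ∣ derivative Q := by
    rw [X_pow_dvd_iff]
    intro d hd
    rw [coeff_derivative, hmiss (d + 1) (by omega) (by omega), zero_mul]
  have hmult : r ≤ (derivative Q).roots.count 0 := by
    rw [count_roots]
    rw [le_rootMultiplicity_iff hQ']
    simpa using hdvd
  -- card roots of Q' at least pos' + neg' + r
  have hsplit' : ((derivative Q).roots.filter fun x => 0 < x).card +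
      ((derivative Q).roots.filter fun x => x < 0).card + r ≤
      Multiset.card (derivative Q).roots := by
    have e1 : (derivative Q).roots.filter (fun x => 0 < x) +
        ((derivative Q).roots.filter fun x => ¬ 0 < x) = (derivative Q).roots :=
      Multiset.filter_add_not _ _
    have e2 : (((derivative Q).roots.filter fun x => ¬ 0 < x).filter fun x => x < 0) +
        (((derivative Q).roots.filter fun x => ¬ 0 < x).filter fun x => ¬ x < 0) =
        (derivative Q).roots.filter fun x => ¬ 0 < x :=
      Multiset.filter_add_not _ _
    have e3 : (((derivative Q).roots.filter fun x => ¬ 0 < x).filter fun x => x < 0) =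
        (derivative Q).roots.filter fun x => x < 0 := by
      rw [Multiset.filter_filter]
      exact Multiset.filter_congr (fun x hx => by
        constructor
        · exact fun h => h.1
        · exact fun h => ⟨h, not_lt.2 h.le⟩)
    have e4 : r ≤ (((derivative Q).roots.filter fun x => ¬ 0 < x).filter fun x => ¬ x < 0).card := by
      refine le_trans ?_ (Multiset.count_le_card 0 _)
      rw [Multiset.count_filter, Multiset.count_filter]
      simpa using hmult
    have c1 := congrArg Multiset.card e1
    have c2 := congrArg Multiset.card e2
    rw [Multiset.card_add] at c1 c2
    rw [e3] at c2
    omega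
  have hdeg' : Multiset.card (derivative Q).roots ≤ (derivative Q).natDegree :=
    (derivative Q).card_roots'
  have hQdeg : Q.natDegree ≠ 0 := by
    have : r + 1 ≤ Q.natDegree := le_natDegree_of_ne_zero hc
    omega
  have hlt : (derivative Q).natDegree < Q.natDegree := natDegree_derivative_lt hQdeg
  omega

lemma my_degua_Q (Q : ℝ[X]) (r : ℕ) (hr1 : 1 ≤ r) (h0 : Q.coeff 0 ≠ 0)
    (hmiss : ∀ k, 1 ≤ k → k ≤ r → Q.coeff k = 0) (hc : Q.coeff (r + 1) ≠ 0) :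
    (Even r → Multiset.card Q.roots + r + 1 ≤ Q.natDegree + 1) ∧
    (Odd r → 0 < Q.coeff 0 * Q.coeff (r + 1) →
      Multiset.card Q.roots + r + 1 ≤ Q.natDegree) ∧
    (Multiset.card Q.roots + r + 1 ≤ Q.natDegree + 2) := by
  classical
  have hQ : Q ≠ 0 := fun h => h0 (by rw [h, coeff_zero])
  have hQ'r : (derivative Q).coeff r = Q.coeff (r + 1) * (r + 1) := coeff_derivative Q r
  have hQ'rne : (derivative Q).coeff r ≠ 0 := by
    rw [hQ'r]
    exact mul_ne_zero hc (by positivity)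
  have hQ' : derivative Q ≠ 0 := fun h => by rw [h, coeff_zero] at hQ'rne; exact hQ'rne rfl
  have hdvd : (X : ℝ[X]) ^ r ∣ derivative Q := by
    rw [X_pow_dvd_iff]
    intro d hd
    rw [coeff_derivative, hmiss (d + 1) (by omega) (by omega), zero_mul]
  obtain ⟨R, hfac⟩ := hdvd
  have hR0 : R.eval 0 = Q.coeff (r + 1) * (r + 1) := by
    rw [← coeff_zero_eq_eval_zero, ← hQ'r, hfac]
    have := coeff_X_pow_mul R r 0
    simpa using this.symm
  have hQ0 : Q.eval 0 = Q.coeff 0 := (coeff_zero_eq_eval_zero Q).symm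
  have hApos := my_stepA Q hQ' (fun x => 0 < x)
    (fun x z y hx hy hxz hzy => lt_trans hx hxz)
  have hAneg := my_stepA Q hQ' (fun x => x < 0)
    (fun x z y hx hy hxz hzy => lt_trans hzy hy)
  refine ⟨?_, ?_, ?_⟩
  · -- Even r
    intro hev
    have hpow : ((-1:ℝ)) ^ r = 1 := hev.neg_one_pow
    rcases lt_or_gt_of_ne (mul_ne_zero h0 hc : Q.coeff 0 * Q.coeff (r+1) ≠ 0) with hσ | hσ
    · -- σ < 0 : refined on negative side
      have hsgn : Q.eval 0 * ((-1:ℝ) ^ r * R.eval 0) < 0 := by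
        rw [hpow, one_mul, hQ0, hR0]
        nlinarith [(show (0:ℝ) < (r:ℝ) + 1 by positivity)]
      have hBneg := my_stepB_neg Q hQ'
        (fun y hy hroot => my_exists_deriv_root_neg Q R r hfac hsgn hy hroot)
      exact my_core Q r h0 hc hmiss 1 (by omega)
    · -- σ > 0 : refined on positive side
      have hsgn : 0 < Q.eval 0 * R.eval 0 := by
        rw [hQ0, hR0]
        nlinarith [(show (0:ℝ) < (r:ℝ) + 1 by positivity)]
      have hBpos := my_stepB_pos Q hQ'
        (fun y hy hroot => my_exists_deriv_root_pos Q R r hfac hsgn hy hroot)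
      exact my_core Q r h0 hc hmiss 1 (by omega)
  · -- Odd r, σ > 0
    intro hodd hσ
    have hpow : ((-1:ℝ)) ^ r = -1 := hodd.neg_one_pow
    have hsgnp : 0 < Q.eval 0 * R.eval 0 := by
      rw [hQ0, hR0]
      nlinarith [(show (0:ℝ) < (r:ℝ) + 1 by positivity)]
    have hsgnn : Q.eval 0 * ((-1:ℝ) ^ r * R.eval 0) < 0 := by
      rw [hpow, neg_one_mul, mul_neg]
      linarith
    have hBpos := my_stepB_pos Q hQ'
      (fun y hy hroot => my_exists_deriv_root_pos Q R r hfac hsgnp hy hroot)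
    have hBneg := my_stepB_neg Q hQ'
      (fun y hy hroot => my_exists_deriv_root_neg Q R r hfac hsgnn hy hroot)
    exact my_core Q r h0 hc hmiss 0 (by omega)
  · exact my_core Q r h0 hc hmiss 2 (by omega)

lemma my_iter_roots (p : ℝ[X]) (m : ℕ) :
    Multiset.card p.roots ≤ Multiset.card (derivative^[m] p).roots + m := by
  induction m with
  | zero => simp
  | succ k ih =>
    calc Multiset.card p.roots ≤ Multiset.card (derivative^[k] p).roots + k := ih
      _ ≤ (Multiset.card (derivative (derivative^[k] p)).roots + 1) + k :=
        add_le_add_left (card_roots_le_derivative _) k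
      _ = Multiset.card (derivative^[k+1] p).roots + (k + 1) := by
        rw [Function.iterate_succ_apply']; omega

lemma my_nonreal (P : ℝ[X]) (hP : P ≠ 0) :
    Multiset.card P.roots +
      Multiset.card ((P.map (algebraMap ℝ ℂ)).roots.filter (fun z => z.im ≠ 0)) =
      P.natDegree := by
  classical
  have hinj : Function.Injective (algebraMap ℝ ℂ) := Complex.ofReal_injective
  have hmap : P.map (algebraMap ℝ ℂ) ≠ 0 := by
    intro h
    exact hP (Polynomial.map_injective _ hinj (by simpa using h))
  have htot : Multiset.card (P.map (algebraMap ℝ ℂ)).roots = P.natDegree := by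
    rw [Polynomial.splits_iff_card_roots.1 (IsAlgClosed.splits _), natDegree_map]
  have hsplit := Multiset.filter_add_not (fun z : ℂ => z.im ≠ 0) (P.map (algebraMap ℝ ℂ)).roots
  have hcards := congrArg Multiset.card hsplit
  rw [Multiset.card_add] at hcards
  have hreal : (P.map (algebraMap ℝ ℂ)).roots.filter (fun z : ℂ => ¬ z.im ≠ 0) =
      Multiset.map (fun x : ℝ => (x : ℂ)) P.roots := by
    ext z
    rw [Multiset.count_filter]
    by_cases hz : z.im = 0
    · rw [if_pos (by simpa using hz)]
      have hzre : ((z.re : ℝ) : ℂ) = z := Complex.ext rfl (by simpa using hz.symm)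
      calc (P.map (algebraMap ℝ ℂ)).roots.count z
          = rootMultiplicity z (P.map (algebraMap ℝ ℂ)) := count_roots _
        _ = rootMultiplicity z.re P := by
            rw [← hzre]
            have h := (eq_rootMultiplicity_map (p := P) hinj z.re).symm
            simpa using h
        _ = P.roots.count z.re := (count_roots _).symm
        _ = (Multiset.map (fun x : ℝ => (x : ℂ)) P.roots).count z := by
            rw [← hzre]
            exact (Multiset.count_map_eq_count' _ _ Complex.ofReal_injective _).symm
    · rw [if_neg (by simpa using hz)]
      symm
      rw [Multiset.count_eq_zero]
      intro hmem
      obtain ⟨x, _, hx⟩ := Multiset.mem_map.1 hmem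
      exact hz (by rw [← hx]; simp)
  rw [hreal] at hcards
  rw [Multiset.card_map] at hcards
  omega

end DeGuaHelpers

/-- De Gua's rule: if a real polynomial `P` has a block of `r ≥ 1` consecutive missing
terms between nonzero coefficients `a_i` and `a_j` (`i > j`, `r = i - j - 1`), then `P`
has at least `r` non-real complex roots (with multiplicity) if `r` is even; at least
`r + 1` if `r` is odd and `a_i·a_j > 0`; and at least `r - 1` if `r` is odd and
`a_i·a_j < 0`. -/
theorem de_gua_rule (P : Polynomial ℝ) (i j : ℕ) (hij : j < i)
    (hi : P.coeff i ≠ 0) (hj : P.coeff j ≠ 0)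
    (hmiss : ∀ k : ℕ, j < k → k < i → P.coeff k = 0)
    (r : ℕ) (hr : r = i - j - 1) (hr1 : 1 ≤ r) :
    (Even r → r ≤ ((P.map (algebraMap ℝ ℂ)).roots.filter (fun z => z.im ≠ 0)).card) ∧
    (Odd r → 0 < P.coeff i * P.coeff j →
      r + 1 ≤ ((P.map (algebraMap ℝ ℂ)).roots.filter (fun z => z.im ≠ 0)).card) ∧
    (Odd r → P.coeff i * P.coeff j < 0 →
      r - 1 ≤ ((P.map (algebraMap ℝ ℂ)).roots.filter (fun z => z.im ≠ 0)).card) := by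
  classical
  have hP : P ≠ 0 := fun h => hi (by rw [h, coeff_zero])
  have hieq : i = j + r + 1 := by omega
  set Q : ℝ[X] := derivative^[j] P with hQdef
  have hcoeffQ : ∀ m : ℕ, Q.coeff m = ((m + j).descFactorial j : ℝ) * P.coeff (m + j) := by
    intro m
    rw [hQdef, coeff_iterate_derivative, nsmul_eq_mul]
  have hd0 : (0 : ℝ) < ((j.descFactorial j : ℕ) : ℝ) := by
    rw [Nat.cast_pos, Nat.pos_iff_ne_zero, Ne, Nat.descFactorial_eq_zero_iff_lt]
    omega
  have hdc : (0 : ℝ) < ((i.descFactorial j : ℕ) : ℝ) := by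
    rw [Nat.cast_pos, Nat.pos_iff_ne_zero, Ne, Nat.descFactorial_eq_zero_iff_lt]
    omega
  have h00 : Q.coeff 0 = ((j.descFactorial j : ℕ) : ℝ) * P.coeff j := by
    rw [hcoeffQ 0]; norm_num
  have hcc : Q.coeff (r + 1) = ((i.descFactorial j : ℕ) : ℝ) * P.coeff i := by
    rw [hcoeffQ (r + 1), show r + 1 + j = i from by omega]
  have hQ0 : Q.coeff 0 ≠ 0 := by
    rw [h00]; exact mul_ne_zero hd0.ne' hj
  have hQmiss : ∀ k, 1 ≤ k → k ≤ r → Q.coeff k = 0 := by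
    intro k h1 h2
    rw [hcoeffQ k, hmiss (k + j) (by omega) (by omega), mul_zero]
  have hQc : Q.coeff (r + 1) ≠ 0 := by
    rw [hcc]; exact mul_ne_zero hdc.ne' hi
  obtain ⟨hA, hB, hC⟩ := my_degua_Q Q r hr1 hQ0 hQmiss hQc
  have hroots := my_iter_roots P j
  rw [← hQdef] at hroots
  have hdegQ : Q.natDegree + j ≤ P.natDegree := by
    have h1 : Q.natDegree ≤ P.natDegree - j := natDegree_iterate_derivative P j
    have h2 : i ≤ P.natDegree := le_natDegree_of_ne_zero hi
    omega
  have hN := my_nonreal P hP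
  set N := Multiset.card ((P.map (algebraMap ℝ ℂ)).roots.filter (fun z => z.im ≠ 0)) with hNdef
  refine ⟨?_, ?_, ?_⟩
  · intro hev
    have := hA hev
    omega
  · intro hodd hσ
    have hσQ : 0 < Q.coeff 0 * Q.coeff (r + 1) := by
      rw [h00, hcc]
      nlinarith [mul_pos (mul_pos hd0 hdc) hσ]
    have := hB hodd hσQ
    omega
  · intro _ _
    omega
end

section
/- Budan's rule (Budan–Fourier theorem): let P be a real polynomial of degree n and let a ≤ b be real numbers with P(a) ≠ 0. Then the number of real roots of P in the interval (a, b], counted with multiplicity, is at most v(P, a) − v(P, b), and moreover it is congruent to v(P, a) − v(P, b) modulo 2. -/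
open Polynomial

/-- `v(P, t)`: number of sign changes in the sequence `(P(t), P'(t), …, P⁽ⁿ⁾(t))`
(`n = deg P`), after deleting its zero entries. -/
noncomputable def vAt (P : Polynomial ℝ) (t : ℝ) : ℕ :=
  signChanges (List.ofFn fun i : Fin (P.natDegree + 1) =>
    ((Polynomial.derivative)^[(i : ℕ)] P).eval t)

/-- same-sign relation -/
def SR (x y : ℝ) : Prop := (x = 0 ∧ y = 0) ∨ 0 < x * y

lemma SR.ne_zero {x y : ℝ} (h : SR x y) (hx : x ≠ 0) : y ≠ 0 := by
  rcases h with ⟨rfl, rfl⟩ | h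
  · exact absurd rfl hx
  · intro h0; subst h0; simp at h

lemma SR.eq_zero {x y : ℝ} (h : SR x y) (hx : x = 0) : y = 0 := by
  rcases h with ⟨rfl, rfl⟩ | h
  · rfl
  · subst hx; simp at h

lemma SR.pair {x x' y y' : ℝ} (h1 : SR x x') (h2 : SR y y') :
    (x * y < 0 ↔ x' * y' < 0) := by
  rcases h1 with ⟨rfl, rfl⟩ | h1
  · simp
  rcases h2 with ⟨rfl, rfl⟩ | h2
  · simp
  constructor <;> intro h <;> nlinarith [mul_pos h1 h2]

lemma forall₂_filter {l₁ l₂ : List ℝ} (h : List.Forall₂ SR l₁ l₂) :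
    List.Forall₂ SR (l₁.filter (fun x => decide (x ≠ 0))) (l₂.filter (fun x => decide (x ≠ 0))) := by
  induction h with
  | nil => simp
  | cons hxy htl ih =>
    rename_i x y l₁' l₂'
    by_cases hx : x = 0
    · have hy : y = 0 := hxy.eq_zero hx
      simpa [hx, hy] using ih
    · have hy : y ≠ 0 := hxy.ne_zero hx
      simp only [List.filter_cons, hx, hy]
      simpa [hx, hy] using List.Forall₂.cons hxy ih

lemma forall₂_countP {l₁ l₂ : List ℝ} (h : List.Forall₂ SR l₁ l₂) :
    (l₁.zip l₁.tail).countP (fun p => decide (p.1 * p.2 < 0)) =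
    (l₂.zip l₂.tail).countP (fun p => decide (p.1 * p.2 < 0)) := by
  induction h with
  | nil => rfl
  | cons hxy htl ih =>
    rename_i x y l₁' l₂'
    cases htl with
    | nil => rfl
    | cons hxy2 htl2 =>
      rename_i u v t₁ t₂
      simp only [List.tail_cons] at ih ⊢
      rw [List.zip_cons_cons, List.zip_cons_cons, List.countP_cons, List.countP_cons]
      rw [ih]
      simp only [hxy.pair hxy2]

lemma signChanges_congr {l₁ l₂ : List ℝ} (h : List.Forall₂ SR l₁ l₂) :
    signChanges l₁ = signChanges l₂ :=
  forall₂_countP (forall₂_filter h)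

lemma signChanges_cons (x : ℝ) (l : List ℝ) :
    signChanges (x :: l) = signChanges l +
      (if x * ((l.filter (fun y => decide (y ≠ 0))).headD 0) < 0 then 1 else 0) := by
  unfold signChanges
  by_cases hx : x = 0
  · simp [hx, List.filter_cons]
  · simp only [List.filter_cons, hx]
    cases hl : l.filter (fun y => decide (y ≠ 0)) with
    | nil => simp [hx]
    | cons y t =>
      rw [if_pos (by simpa using hx)]
      simp only [List.headD_cons, List.tail_cons, List.zip_cons_cons, List.countP_cons]
      simp
      split_ifs with h <;> simp [h]

noncomputable def dseq (P : Polynomial ℝ) (t : ℝ) : List ℝ :=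
  List.ofFn fun i : Fin (P.natDegree + 1) => ((Polynomial.derivative)^[(i : ℕ)] P).eval t

noncomputable def fnz (l : List ℝ) : ℝ := (l.filter (fun y => decide (y ≠ 0))).headD 0
lemma vAt_def (P : Polynomial ℝ) (t : ℝ) : vAt P t = signChanges (dseq P t) := rfl

lemma ofFn_cast {n m : ℕ} (g : ℕ → ℝ) (h : n = m) :
    List.ofFn (fun i : Fin n => g i) = List.ofFn (fun i : Fin m => g i) := by subst h; rfl

lemma natDegree_deriv (P : Polynomial ℝ) (hP : P.natDegree ≠ 0) :
    P.derivative.natDegree = P.natDegree - 1 :=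
  natDegree_eq_of_degree_eq_some (degree_derivative_eq P (Nat.pos_of_ne_zero hP))

lemma deriv_ne_zero (P : Polynomial ℝ) (hP : P.natDegree ≠ 0) : P.derivative ≠ 0 := by
  intro h
  exact hP (natDegree_eq_zero_of_derivative_eq_zero h)

lemma dseq_cons (P : Polynomial ℝ) (hP : P.natDegree ≠ 0) (t : ℝ) :
    dseq P t = P.eval t :: dseq P.derivative t := by
  have hd : P.derivative.natDegree = P.natDegree - 1 := natDegree_deriv P hP
  obtain ⟨d, hdd⟩ : ∃ d, P.natDegree = d + 1 :=
    ⟨P.natDegree - 1, (Nat.succ_pred_eq_of_pos (Nat.pos_of_ne_zero hP)).symm⟩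
  unfold dseq
  rw [ofFn_cast (fun i => ((Polynomial.derivative)^[i] P).eval t) (by omega : P.natDegree + 1 = d + 2)]
  rw [ofFn_cast (fun i => ((Polynomial.derivative)^[i] P.derivative).eval t)
    (by omega : P.derivative.natDegree + 1 = d + 1)]
  rw [List.ofFn_succ]
  simp only [Fin.val_zero, Function.iterate_zero_apply, Fin.val_succ,
    Function.iterate_succ_apply]

lemma vAt_head (P : Polynomial ℝ) (hP : P.natDegree ≠ 0) (t : ℝ) :
    vAt P t = vAt P.derivative t +
      (if P.eval t * fnz (dseq P.derivative t) < 0 then 1 else 0) := by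
  rw [vAt_def, dseq_cons P hP, signChanges_cons, ← vAt_def]; rfl

lemma fnz_cons_ne (x : ℝ) (l : List ℝ) (hx : x ≠ 0) : fnz (x :: l) = x := by
  unfold fnz
  rw [List.filter_cons, if_pos (by simpa using hx)]
  rfl

lemma fnz_cons_zero (l : List ℝ) : fnz ((0:ℝ) :: l) = fnz l := by
  unfold fnz
  simp [List.filter_cons]

lemma fnz_ofFn : ∀ (m n : ℕ) (f : Fin n → ℝ) (hm : m < n),
    (∀ i (h : i < m), f ⟨i, h.trans hm⟩ = 0) → f ⟨m, hm⟩ ≠ 0 →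
    fnz (List.ofFn f) = f ⟨m, hm⟩ := by
  intro m
  induction m with
  | zero =>
    intro n f hm _ hne
    obtain ⟨k, rfl⟩ : ∃ k, n = k + 1 := ⟨n - 1, by omega⟩
    rw [List.ofFn_succ]
    exact fnz_cons_ne _ _ (by simpa using hne)
  | succ m ih =>
    intro n f hm hz hne
    obtain ⟨k, rfl⟩ : ∃ k, n = k + 1 := ⟨n - 1, by omega⟩
    rw [List.ofFn_succ]
    have h0 : f 0 = 0 := by
      have := hz 0 (Nat.succ_pos m)
      simpa using this
    rw [h0, fnz_cons_zero]
    have := ih k (fun i => f i.succ) (by omega)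
      (fun i h => by
        have := hz (i + 1) (by omega)
        simpa [Fin.succ] using this)
      (by simpa [Fin.succ] using hne)
    rw [this]
    simp [Fin.succ]

lemma iter_deriv_rootMult_ne_zero (Q : Polynomial ℝ) (hQ : Q ≠ 0) (c : ℝ) :
    ((Polynomial.derivative)^[rootMultiplicity c Q] Q).eval c ≠ 0 := by
  rw [eval_iterate_derivative_rootMultiplicity]
  have h1 : (Q /ₘ (X - C c) ^ rootMultiplicity c Q).eval c ≠ 0 :=
    eval_divByMonic_pow_rootMultiplicity_ne_zero c hQ
  simp only [nsmul_eq_mul, ne_eq, mul_eq_zero, not_or]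
  exact ⟨Nat.cast_ne_zero.mpr (Nat.factorial_ne_zero _), h1⟩

lemma rootMult_le_natDegree (Q : Polynomial ℝ) (hQ : Q ≠ 0) (c : ℝ) :
    rootMultiplicity c Q ≤ Q.natDegree := by
  have h := Polynomial.natDegree_le_of_dvd (pow_rootMultiplicity_dvd Q c) hQ
  simpa [Polynomial.natDegree_pow, Polynomial.natDegree_X_sub_C] using h

lemma fnz_dseq (Q : Polynomial ℝ) (hQ : Q ≠ 0) (c : ℝ) :
    fnz (dseq Q c) = ((Polynomial.derivative)^[rootMultiplicity c Q] Q).eval c := by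
  have hm : rootMultiplicity c Q < Q.natDegree + 1 :=
    Nat.lt_succ_of_le (rootMult_le_natDegree Q hQ c)
  exact fnz_ofFn (rootMultiplicity c Q) (Q.natDegree + 1)
    (fun i => ((Polynomial.derivative)^[(i : ℕ)] Q).eval c) hm
    (fun i h => isRoot_iterate_derivative_of_lt_rootMultiplicity h)
    (iter_deriv_rootMult_ne_zero Q hQ c)

lemma sign_near (Q : Polynomial ℝ) (hQ : Q ≠ 0) (c : ℝ) :
    ∃ ε > 0,
      (∀ t, c < t → t < c + ε →
        0 < Q.eval t * ((Polynomial.derivative)^[rootMultiplicity c Q] Q).eval c) ∧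
      (∀ t, c - ε < t → t < c →
        0 < Q.eval t * ((Polynomial.derivative)^[rootMultiplicity c Q] Q).eval c *
          (-1) ^ (rootMultiplicity c Q)) := by
  set m := rootMultiplicity c Q with hmdef
  set R := Q /ₘ (X - C c) ^ m with hRdef
  have hR : R.eval c ≠ 0 := eval_divByMonic_pow_rootMultiplicity_ne_zero c hQ
  have hfac : (X - C c) ^ m * R = Q := pow_mul_divByMonic_rootMultiplicity_eq Q c
  have hu : ((Polynomial.derivative)^[m] Q).eval c = (m.factorial : ℝ) * R.eval c := by
    rw [hmdef, eval_iterate_derivative_rootMultiplicity, nsmul_eq_mul]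
  have hopen : IsOpen {t : ℝ | 0 < R.eval t * R.eval c} :=
    isOpen_lt continuous_const ((Polynomial.continuous R).mul continuous_const)
  have hmem : c ∈ {t : ℝ | 0 < R.eval t * R.eval c} := mul_self_pos.2 hR
  obtain ⟨ε, hε, hball⟩ := Metric.isOpen_iff.1 hopen c hmem
  have hev : ∀ t : ℝ, Q.eval t = (t - c) ^ m * R.eval t := by
    intro t
    rw [← hfac]
    simp [eval_mul, eval_pow]
  refine ⟨ε, hε, ?_, ?_⟩
  · intro t h1 h2
    have hRR : 0 < R.eval t * R.eval c := hball (by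
      simp only [Metric.mem_ball, Real.dist_eq]
      rw [abs_lt]; constructor <;> linarith)
    have key : Q.eval t * ((Polynomial.derivative)^[m] Q).eval c =
        (t - c) ^ m * (m.factorial : ℝ) * (R.eval t * R.eval c) := by
      rw [hev t, hu]; ring
    rw [key]
    exact mul_pos (mul_pos (pow_pos (by linarith) m)
      (Nat.cast_pos.2 (Nat.factorial_pos m))) hRR
  · intro t h1 h2
    have hRR : 0 < R.eval t * R.eval c := hball (by
      simp only [Metric.mem_ball, Real.dist_eq]
      rw [abs_lt]; constructor <;> linarith)
    have hpow : (t - c) ^ m * (-1 : ℝ) ^ m = (c - t) ^ m := by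
      rw [← mul_pow, show (t - c) * (-1 : ℝ) = c - t by ring]
    have key : Q.eval t * ((Polynomial.derivative)^[m] Q).eval c * (-1) ^ m =
        (c - t) ^ m * (m.factorial : ℝ) * (R.eval t * R.eval c) := by
      rw [hev t, hu, ← hpow]; ring
    rw [key]
    exact mul_pos (mul_pos (pow_pos (by linarith) m)
      (Nat.cast_pos.2 (Nat.factorial_pos m))) hRR

lemma same_sign_trans {A B u : ℝ} (hu : u ≠ 0) (h1 : 0 < A * u) (h2 : 0 < B * u) :
    0 < A * B := by nlinarith [mul_pos h1 h2, mul_self_pos.2 hu]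

lemma flip_sign_trans {A B u k : ℝ} (hu : u ≠ 0) (hk : k * k = 1)
    (h1 : 0 < A * u * (k * (-1))) (h2 : 0 < B * u * k) : A * B < 0 := by
  nlinarith [mul_pos h1 h2, mul_self_pos.2 hu, sq_nonneg (k*u), sq_nonneg (A*u), sq_nonneg (B*u)]

lemma sign_flip_iff {A a B b : ℝ} (h1 : 0 < A * a) (h2 : B * b < 0) :
    (A * B < 0 ↔ 0 < a * b) := by
  constructor <;> intro h <;> nlinarith [mul_pos h1 (show (0:ℝ) < -(B*b) by linarith)]

lemma signChanges_singleton (x : ℝ) : signChanges [x] = 0 := by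
  unfold signChanges
  by_cases hx : x = 0 <;> simp [List.filter_cons, hx]

lemma vAt_of_natDegree_zero {P : Polynomial ℝ} (hP : P.natDegree = 0) (t : ℝ) :
    vAt P t = 0 := by
  rw [vAt_def]
  unfold dseq
  rw [ofFn_cast (fun i => ((Polynomial.derivative)^[i] P).eval t) (by omega : P.natDegree + 1 = 1)]
  rw [show List.ofFn (fun i : Fin 1 => ((Polynomial.derivative)^[(i:ℕ)] P).eval t)
      = [P.eval t] by simp]
  exact signChanges_singleton _

lemma rootMult_of_natDegree_zero {P : Polynomial ℝ} (hP : P.natDegree = 0) (h0 : P ≠ 0)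
    (c : ℝ) : rootMultiplicity c P = 0 := by
  obtain ⟨a, rfl⟩ := Polynomial.natDegree_eq_zero.1 hP
  have ha : a ≠ 0 := fun h => h0 (by simp [h])
  exact rootMultiplicity_eq_zero (by simp [IsRoot, ha])

lemma fnz_dseq_of_eval_ne {Q : Polynomial ℝ} {t : ℝ} (h : Q.eval t ≠ 0) :
    fnz (dseq Q t) = Q.eval t := by
  have := fnz_ofFn 0 (Q.natDegree + 1)
    (fun i => ((Polynomial.derivative)^[(i:ℕ)] Q).eval t) (Nat.succ_pos _)
    (fun i hi => absurd hi (Nat.not_lt_zero i)) (by simpa using h)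
  unfold dseq
  rw [this]
  simp
lemma loc : ∀ (n : ℕ) (P : Polynomial ℝ), P ≠ 0 → P.natDegree ≤ n → ∀ c : ℝ,
    ∃ ε > 0,
      (∀ t, c < t → t < c + ε → vAt P t = vAt P c) ∧
      (∀ t, c - ε < t → t < c →
        ∃ e, vAt P t = vAt P c + rootMultiplicity c P + 2 * e) := by
  intro n
  induction n with
  | zero =>
    intro P hP hdeg c
    have h0 : P.natDegree = 0 := Nat.le_zero.1 hdeg
    exact ⟨1, one_pos,
      fun t _ _ => by rw [vAt_of_natDegree_zero h0, vAt_of_natDegree_zero h0],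
      fun t _ _ => ⟨0, by
        rw [vAt_of_natDegree_zero h0, vAt_of_natDegree_zero h0,
          rootMult_of_natDegree_zero h0 hP]⟩⟩
  | succ n ih =>
    intro P hP hdeg c
    by_cases h0 : P.natDegree = 0
    · exact ⟨1, one_pos,
        fun t _ _ => by rw [vAt_of_natDegree_zero h0, vAt_of_natDegree_zero h0],
        fun t _ _ => ⟨0, by
          rw [vAt_of_natDegree_zero h0, vAt_of_natDegree_zero h0,
            rootMult_of_natDegree_zero h0 hP]⟩⟩
    have hP' : derivative P ≠ 0 := deriv_ne_zero P h0
    have hdeg' : (derivative P).natDegree ≤ n := by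
      rw [natDegree_deriv P h0]; omega
    obtain ⟨ε₁, hε₁, hR, hL⟩ := ih (derivative P) hP' hdeg' c
    obtain ⟨ε₂, hε₂, hPr, hPl⟩ := sign_near P hP c
    obtain ⟨ε₃, hε₃, hQr, hQl⟩ := sign_near (derivative P) hP' c
    have hu : ((Polynomial.derivative)^[rootMultiplicity c P] P).eval c ≠ 0 :=
      iter_deriv_rootMult_ne_zero P hP c
    have hu' : ((Polynomial.derivative)^[rootMultiplicity c (derivative P)]
        (derivative P)).eval c ≠ 0 := iter_deriv_rootMult_ne_zero _ hP' c
    have hc : vAt P c = vAt (derivative P) c +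
        (if P.eval c * ((Polynomial.derivative)^[rootMultiplicity c (derivative P)]
          (derivative P)).eval c < 0 then 1 else 0) := by
      rw [vAt_head P h0 c, fnz_dseq _ hP' c]
    have le1 : min ε₁ (min ε₂ ε₃) ≤ ε₁ := min_le_left _ _
    have le2 : min ε₁ (min ε₂ ε₃) ≤ ε₂ := (min_le_right _ _).trans (min_le_left _ _)
    have le3 : min ε₁ (min ε₂ ε₃) ≤ ε₃ := (min_le_right _ _).trans (min_le_right _ _)
    refine ⟨min ε₁ (min ε₂ ε₃), by positivity, ?_, ?_⟩
    · -- right constancy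
      intro t h1 h2
      have hBt : 0 < (derivative P).eval t *
          ((Polynomial.derivative)^[rootMultiplicity c (derivative P)]
            (derivative P)).eval c := hQr t h1 (by linarith)
      have hB : (derivative P).eval t ≠ 0 := by
        intro h; rw [h, zero_mul] at hBt; exact lt_irrefl 0 hBt
      have hhead : vAt P t = vAt (derivative P) t +
          (if P.eval t * (derivative P).eval t < 0 then 1 else 0) := by
        rw [vAt_head P h0 t, fnz_dseq_of_eval_ne hB]
      by_cases hroot : P.eval c = 0
      · have hmpos : 0 < rootMultiplicity c P := (rootMultiplicity_pos hP).2 hroot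
        have hm : rootMultiplicity c (derivative P) = rootMultiplicity c P - 1 :=
          derivative_rootMultiplicity_of_root hroot
        have hiter : (Polynomial.derivative)^[rootMultiplicity c P - 1] (derivative P)
            = (Polynomial.derivative)^[rootMultiplicity c P] P := by
          have h := Function.iterate_succ_apply (fun q : Polynomial ℝ => derivative q)
            (rootMultiplicity c P - 1) P
          rw [Nat.succ_eq_add_one,
            show rootMultiplicity c P - 1 + 1 = rootMultiplicity c P by omega] at h
          exact h.symm
        rw [hm, hiter] at hBt
        have hAt : 0 < P.eval t *
            ((Polynomial.derivative)^[rootMultiplicity c P] P).eval c :=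
          hPr t h1 (by linarith)
        have hpos : 0 < P.eval t * (derivative P).eval t :=
          same_sign_trans hu hAt hBt
        rw [hhead, hR t h1 (by linarith), hc, hroot]
        simp [not_lt.2 hpos.le]
      · have hm0 : rootMultiplicity c P = 0 := rootMultiplicity_eq_zero hroot
        have hAt : 0 < P.eval t * P.eval c := by
          have := hPr t h1 (by linarith)
          rwa [hm0, Function.iterate_zero_apply] at this
        have hpair : (P.eval t * (derivative P).eval t < 0 ↔
            P.eval c * ((Polynomial.derivative)^[rootMultiplicity c (derivative P)]
              (derivative P)).eval c < 0) :=
          SR.pair (Or.inr hAt) (Or.inr hBt)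
        rw [hhead, hR t h1 (by linarith), hc]
        simp only [hpair]
    · -- left jump
      intro t h1 h2
      obtain ⟨e, he⟩ := hL t (by linarith) h2
      have hBt : 0 < (derivative P).eval t *
          ((Polynomial.derivative)^[rootMultiplicity c (derivative P)]
            (derivative P)).eval c * (-1) ^ (rootMultiplicity c (derivative P)) :=
        hQl t (by linarith) h2
      have hB : (derivative P).eval t ≠ 0 := by
        intro h; rw [h, zero_mul, zero_mul] at hBt; exact lt_irrefl 0 hBt
      have hhead : vAt P t = vAt (derivative P) t +
          (if P.eval t * (derivative P).eval t < 0 then 1 else 0) := by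
        rw [vAt_head P h0 t, fnz_dseq_of_eval_ne hB]
      by_cases hroot : P.eval c = 0
      · have hmpos : 0 < rootMultiplicity c P := (rootMultiplicity_pos hP).2 hroot
        have hm : rootMultiplicity c (derivative P) = rootMultiplicity c P - 1 :=
          derivative_rootMultiplicity_of_root hroot
        have hiter : (Polynomial.derivative)^[rootMultiplicity c P - 1] (derivative P)
            = (Polynomial.derivative)^[rootMultiplicity c P] P := by
          have h := Function.iterate_succ_apply (fun q : Polynomial ℝ => derivative q)
            (rootMultiplicity c P - 1) P
          rw [Nat.succ_eq_add_one,
            show rootMultiplicity c P - 1 + 1 = rootMultiplicity c P by omega] at h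
          exact h.symm
        rw [hm, hiter] at hBt
        have hAt : 0 < P.eval t *
            ((Polynomial.derivative)^[rootMultiplicity c P] P).eval c *
            (-1) ^ (rootMultiplicity c P) := hPl t (by linarith) h2
        have hpow : ((-1 : ℝ)) ^ (rootMultiplicity c P) =
            (-1) ^ (rootMultiplicity c P - 1) * (-1) := by
          rw [← pow_succ, show rootMultiplicity c P - 1 + 1 = rootMultiplicity c P by omega]
        rw [hpow] at hAt
        have hkk : ((-1 : ℝ)) ^ (rootMultiplicity c P - 1) *
            ((-1 : ℝ)) ^ (rootMultiplicity c P - 1) = 1 := by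
          rw [← pow_add]
          exact Even.neg_one_pow ⟨rootMultiplicity c P - 1, rfl⟩
        have hneg : P.eval t * (derivative P).eval t < 0 := by
          exact flip_sign_trans hu hkk hAt hBt
        have e1 : vAt P t = vAt (derivative P) t + 1 := by
          rw [hhead, if_pos hneg]
        have e2 : vAt P c = vAt (derivative P) c := by
          rw [hc, hroot]; simp
        exact ⟨e, by omega⟩
      · have hm0 : rootMultiplicity c P = 0 := rootMultiplicity_eq_zero hroot
        have hAt : 0 < P.eval t * P.eval c := by
          have := hPl t (by linarith) h2
          rwa [hm0, Function.iterate_zero_apply, pow_zero, mul_one] at this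
        rcases Nat.even_or_odd (rootMultiplicity c (derivative P)) with hev | hodd
        · have h2' : 0 < (derivative P).eval t *
              ((Polynomial.derivative)^[rootMultiplicity c (derivative P)]
                (derivative P)).eval c := by
            rwa [hev.neg_one_pow, mul_one] at hBt
          have hpair : (P.eval t * (derivative P).eval t < 0 ↔
              P.eval c * ((Polynomial.derivative)^[rootMultiplicity c (derivative P)]
                (derivative P)).eval c < 0) :=
            SR.pair (Or.inr hAt) (Or.inr h2')
          obtain ⟨q, hq⟩ := hev
          have e1 : vAt P t = vAt (derivative P) t +
              (if P.eval c * ((Polynomial.derivative)^[rootMultiplicity c (derivative P)]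
                (derivative P)).eval c < 0 then 1 else 0) := by
            rw [hhead]; simp only [hpair]
          exact ⟨e + q, by omega⟩
        · have h2' : (derivative P).eval t *
              ((Polynomial.derivative)^[rootMultiplicity c (derivative P)]
                (derivative P)).eval c < 0 := by
            rw [hodd.neg_one_pow] at hBt
            linarith
          have hpair : (P.eval t * (derivative P).eval t < 0 ↔
              0 < P.eval c * ((Polynomial.derivative)^[rootMultiplicity c (derivative P)]
                (derivative P)).eval c) := sign_flip_iff hAt h2'
          obtain ⟨q, hq⟩ := hodd
          by_cases hd : P.eval c * ((Polynomial.derivative)^[rootMultiplicity c (derivative P)]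
              (derivative P)).eval c < 0
          · have hnd : ¬ (P.eval t * (derivative P).eval t < 0) := by
              rw [hpair]; intro h; linarith
            have e1 : vAt P t = vAt (derivative P) t := by
              rw [hhead, if_neg hnd, Nat.add_zero]
            have e2 : vAt P c = vAt (derivative P) c + 1 := by
              rw [hc, if_pos hd]
            exact ⟨e + q, by omega⟩
          · have hdm : P.eval c * ((Polynomial.derivative)^[rootMultiplicity c (derivative P)]
                (derivative P)).eval c ≠ 0 := mul_ne_zero hroot hu'
            have hdp : 0 < P.eval c * ((Polynomial.derivative)^[rootMultiplicity c (derivative P)]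
                (derivative P)).eval c := lt_of_le_of_ne (not_lt.1 hd) (Ne.symm hdm)
            have e1 : vAt P t = vAt (derivative P) t + 1 := by
              rw [hhead, if_pos (hpair.2 hdp)]
            have e2 : vAt P c = vAt (derivative P) c := by
              rw [hc, if_neg hd, Nat.add_zero]
            exact ⟨e + q + 1, by omega⟩
lemma eval_mul_pos_of_no_root (Q : Polynomial ℝ) {s t : ℝ} (hst : s ≤ t)
    (h : ∀ x, s ≤ x → x ≤ t → Q.eval x ≠ 0) : 0 < Q.eval s * Q.eval t := by
  by_contra hc
  push_neg at hc
  have hcont : ContinuousOn (fun x => Q.eval x) (Set.Icc s t) :=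
    (Polynomial.continuous Q).continuousOn
  rcases mul_nonpos_iff.1 hc with ⟨h1, h2⟩ | ⟨h1, h2⟩
  · have : (0:ℝ) ∈ Set.Icc (Q.eval t) (Q.eval s) := ⟨h2, h1⟩
    obtain ⟨x, hx, hx0⟩ := intermediate_value_Icc' hst hcont this
    exact h x hx.1 hx.2 hx0
  · have : (0:ℝ) ∈ Set.Icc (Q.eval s) (Q.eval t) := ⟨h1, h2⟩
    obtain ⟨x, hx, hx0⟩ := intermediate_value_Icc hst hcont this
    exact h x hx.1 hx.2 hx0

lemma forall₂_ofFn : ∀ (n : ℕ) (f g : Fin n → ℝ), (∀ i, SR (f i) (g i)) →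
    List.Forall₂ SR (List.ofFn f) (List.ofFn g) := by
  intro n
  induction n with
  | zero => intro f g _; simp
  | succ n ih =>
    intro f g h
    rw [List.ofFn_succ, List.ofFn_succ]
    exact List.Forall₂.cons (h 0) (ih _ _ (fun i => h i.succ))

lemma vAt_constant (P : Polynomial ℝ) {s t : ℝ} (hst : s ≤ t)
    (h : ∀ i, i ≤ P.natDegree → ∀ x, s ≤ x → x ≤ t →
      ((Polynomial.derivative)^[i] P).eval x ≠ 0) :
    vAt P s = vAt P t := by
  rw [vAt_def, vAt_def]
  apply signChanges_congr
  unfold dseq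
  apply forall₂_ofFn
  intro i
  exact Or.inr (eval_mul_pos_of_no_root _ hst
    (fun x hx1 hx2 => h i (Nat.lt_succ_iff.1 i.isLt) x hx1 hx2))

noncomputable def NN (P : Polynomial ℝ) : Polynomial ℝ :=
  ∏ i ∈ Finset.range (P.natDegree + 1), (Polynomial.derivative)^[i] P

lemma iter_deriv_ne_zero (P : Polynomial ℝ) (hP : P ≠ 0) :
    ∀ i, i ≤ P.natDegree → (Polynomial.derivative)^[i] P ≠ 0 ∧
      ((Polynomial.derivative)^[i] P).natDegree = P.natDegree - i := by
  intro i
  induction i with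
  | zero => intro _; exact ⟨hP, by simp⟩
  | succ i ih =>
    intro hi
    obtain ⟨hne, hdeg⟩ := ih (by omega)
    have hdpos : ((Polynomial.derivative)^[i] P).natDegree ≠ 0 := by omega
    constructor
    · rw [Function.iterate_succ_apply']
      exact deriv_ne_zero _ hdpos
    · rw [Function.iterate_succ_apply', natDegree_deriv _ hdpos, hdeg]
      omega

lemma NN_ne_zero (P : Polynomial ℝ) (hP : P ≠ 0) : NN P ≠ 0 := by
  apply Finset.prod_ne_zero_iff.2
  intro i hi
  exact (iter_deriv_ne_zero P hP i (Nat.lt_succ_iff.1 (Finset.mem_range.1 hi))).1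

lemma mem_S (P : Polynomial ℝ) (hP : P ≠ 0) {x a b : ℝ} (i : ℕ) (hi : i ≤ P.natDegree)
    (hz : ((Polynomial.derivative)^[i] P).eval x = 0) (hax : a < x) (hxb : x ≤ b) :
    x ∈ (NN P).roots.toFinset.filter (fun y => a < y ∧ y ≤ b) := by
  refine Finset.mem_filter.2 ⟨Multiset.mem_toFinset.2 ?_, hax, hxb⟩
  rw [Polynomial.mem_roots (NN_ne_zero P hP)]
  show (NN P).eval x = 0
  unfold NN
  rw [Polynomial.eval_prod]
  exact Finset.prod_eq_zero (Finset.mem_range.2 (by omega)) hz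
lemma chain (P : Polynomial ℝ) (hP : P ≠ 0) :
    ∀ (k : ℕ) (a b : ℝ), a ≤ b →
      ((NN P).roots.toFinset.filter (fun x => a < x ∧ x ≤ b)).card = k →
      ∃ e, vAt P a = vAt P b +
        (P.roots.filter (fun x => a < x ∧ x ≤ b)).card + 2 * e := by
  intro k
  induction k using Nat.strong_induction_on with
  | _ k ihk =>
  intro a b hab hcard
  rcases Nat.eq_zero_or_pos k with rfl | hkpos
  · -- no critical points in (a, b]
    have hempty : (NN P).roots.toFinset.filter (fun x => a < x ∧ x ≤ b) = ∅ :=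
      Finset.card_eq_zero.1 hcard
    have hnoroot : ∀ x, a < x → x ≤ b → ∀ i, i ≤ P.natDegree →
        ((Polynomial.derivative)^[i] P).eval x ≠ 0 := by
      intro x hax hxb i hi hz
      have := mem_S P hP i hi hz hax hxb
      rw [hempty] at this
      exact absurd this (Finset.notMem_empty x)
    have hroots0 : (P.roots.filter (fun x => a < x ∧ x ≤ b)).card = 0 := by
      rw [Multiset.card_eq_zero, Multiset.filter_eq_nil]
      intro x hx ⟨hax, hxb⟩
      exact hnoroot x hax hxb 0 (Nat.zero_le _) ((Polynomial.mem_roots hP).1 hx)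
    rcases eq_or_lt_of_le hab with rfl | hlt
    · exact ⟨0, by rw [hroots0]; omega⟩
    obtain ⟨ε, hε, hRc, _⟩ := loc P.natDegree P hP le_rfl a
    have h1 : a < min (a + ε/2) b := lt_min (by linarith) hlt
    have h2 : min (a + ε/2) b < a + ε := (min_le_left _ _).trans_lt (by linarith)
    have h3 : min (a + ε/2) b ≤ b := min_le_right _ _
    have e1 : vAt P a = vAt P (min (a + ε/2) b) := (hRc _ h1 h2).symm
    have e2 : vAt P (min (a + ε/2) b) = vAt P b := by
      apply vAt_constant P h3
      intro i hi x hx1 hx2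
      exact hnoroot x (h1.trans_le hx1) hx2 i hi
    exact ⟨0, by rw [e1, e2, hroots0]; omega⟩
  · -- at least one critical point
    have hne : ((NN P).roots.toFinset.filter (fun x => a < x ∧ x ≤ b)).Nonempty :=
      Finset.card_pos.1 (by omega)
    set S := (NN P).roots.toFinset.filter (fun x => a < x ∧ x ≤ b) with hSdef
    set c := S.min' hne with hcdef
    have hcS : c ∈ S := S.min'_mem hne
    obtain ⟨hcroots, hac, hcb⟩ := Finset.mem_filter.1 hcS
    obtain ⟨ε, hε, _, hLc⟩ := loc P.natDegree P hP le_rfl c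
    set t0 := max (c - ε/2) ((a+c)/2) with ht0def
    have h1 : a < t0 := lt_of_lt_of_le (by linarith) (le_max_right _ _)
    have h2 : t0 < c := max_lt (by linarith) (by linarith)
    have h3 : c - ε < t0 := lt_of_lt_of_le (by linarith) (le_max_left _ _)
    obtain ⟨e₁, he₁⟩ := hLc t0 h3 h2
    have hS0 : ((NN P).roots.toFinset.filter (fun x => a < x ∧ x ≤ t0)).card = 0 := by
      rw [Finset.card_eq_zero]
      apply Finset.eq_empty_iff_forall_notMem.2
      intro x hx
      obtain ⟨hxroots, hax, hxt0⟩ := Finset.mem_filter.1 hx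
      have hxS : x ∈ S := Finset.mem_filter.2 ⟨hxroots, hax, le_of_lt ((hxt0.trans_lt h2).trans_le hcb)⟩
      exact absurd (S.min'_le x hxS) (by push_neg; exact (hxt0.trans_lt h2))
    obtain ⟨e₀, he₀⟩ := ihk 0 hkpos a t0 h1.le hS0
    have hr0 : (P.roots.filter (fun x => a < x ∧ x ≤ t0)).card = 0 := by
      rw [Multiset.card_eq_zero, Multiset.filter_eq_nil]
      intro x hx ⟨hax, hxt0⟩
      have hxS : x ∈ S := mem_S P hP 0 (Nat.zero_le _) ((Polynomial.mem_roots hP).1 hx)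
        hax (hxt0.trans h2.le |>.trans hcb)
      exact absurd (S.min'_le x hxS) (by push_neg; exact hxt0.trans_lt h2)
    rw [hr0] at he₀
    have hSsplit : S = insert c ((NN P).roots.toFinset.filter (fun x => c < x ∧ x ≤ b)) := by
      ext x
      simp only [Finset.mem_insert, Finset.mem_filter, hSdef]
      constructor
      · rintro ⟨hxr, hax, hxb⟩
        by_cases hxc : x = c
        · exact Or.inl hxc
        · refine Or.inr ⟨hxr, ?_, hxb⟩
          exact lt_of_le_of_ne (S.min'_le x (Finset.mem_filter.2 ⟨hxr, hax, hxb⟩)) (Ne.symm hxc)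
      · rintro (rfl | ⟨hxr, hcx, hxb⟩)
        · exact ⟨hcroots, hac, hcb⟩
        · exact ⟨hxr, hac.trans hcx, hxb⟩
    have hcnot : c ∉ (NN P).roots.toFinset.filter (fun x => c < x ∧ x ≤ b) := by
      simp [Finset.mem_filter]
    have hcard2 : ((NN P).roots.toFinset.filter (fun x => c < x ∧ x ≤ b)).card = k - 1 := by
      have := hcard
      rw [hSsplit, Finset.card_insert_of_notMem hcnot] at this
      omega
    obtain ⟨e₂, he₂⟩ := ihk (k-1) (by omega) c b hcb hcard2
    -- root count split
    have hsplit : (P.roots.filter (fun x => a < x ∧ x ≤ b)).card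
        = rootMultiplicity c P + (P.roots.filter (fun x => c < x ∧ x ≤ b)).card := by
      have hfad := Multiset.filter_add_filter (fun x => a < x ∧ x ≤ c)
        (fun x => c < x ∧ x ≤ b) P.roots
      have hor : Multiset.filter (fun x => (a < x ∧ x ≤ c) ∨ (c < x ∧ x ≤ b)) P.roots
          = Multiset.filter (fun x => a < x ∧ x ≤ b) P.roots := by
        apply Multiset.filter_congr
        intro x _
        constructor
        · rintro (⟨u1, u2⟩ | ⟨u1, u2⟩)
          · exact ⟨u1, u2.trans hcb⟩
          · exact ⟨hac.trans u1, u2⟩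
        · rintro ⟨u1, u2⟩
          rcases le_or_gt x c with h | h
          · exact Or.inl ⟨u1, h⟩
          · exact Or.inr ⟨h, u2⟩
      have hand : Multiset.filter (fun x => (a < x ∧ x ≤ c) ∧ (c < x ∧ x ≤ b)) P.roots = 0 := by
        rw [Multiset.filter_eq_nil]
        rintro x _ ⟨⟨_, u2⟩, u3, _⟩
        exact absurd (u3.trans_le u2) (lt_irrefl c)
      have hfirst : (P.roots.filter (fun x => a < x ∧ x ≤ c)).card = rootMultiplicity c P := by
        have heq : P.roots.filter (fun x => a < x ∧ x ≤ c) = P.roots.filter (fun x => c = x) := by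
          apply Multiset.filter_congr
          intro x hx
          constructor
          · rintro ⟨u1, u2⟩
            by_contra hxc
            have hxltc : x < c := lt_of_le_of_ne u2 (fun h => hxc h.symm)
            have hxS : x ∈ S := mem_S P hP 0 (Nat.zero_le _) ((Polynomial.mem_roots hP).1 hx)
              u1 (hxltc.le.trans hcb)
            exact absurd (S.min'_le x hxS) (by push_neg; exact hxltc)
          · rintro rfl
            exact ⟨hac, le_rfl⟩
        rw [heq, ← Multiset.count_eq_card_filter_eq, Polynomial.count_roots]
      have hcards := congrArg Multiset.card hfad
      rw [Multiset.card_add, Multiset.card_add, hor, hand] at hcards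
      simp only [Multiset.card_zero, Nat.add_zero] at hcards
      omega
    exact ⟨e₀ + e₁ + e₂, by omega⟩


/-- Budan's rule (Budan–Fourier theorem): if `a ≤ b` and `P(a) ≠ 0`, then the number of
real roots of `P` in `(a, b]`, with multiplicity, is at most `v(P, a) - v(P, b)`, and is
congruent to it modulo `2`. -/
theorem budan_fourier (P : Polynomial ℝ) (a b : ℝ) (hab : a ≤ b) (ha : P.eval a ≠ 0) :
    (((P.roots.filter (fun x => a < x ∧ x ≤ b)).card : ℤ) ≤ (vAt P a : ℤ) - vAt P b) ∧
    ((P.roots.filter (fun x => a < x ∧ x ≤ b)).card : ℤ) ≡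
      (vAt P a : ℤ) - vAt P b [ZMOD 2] := by
  have hP : P ≠ 0 := fun h => ha (by simp [h])
  obtain ⟨e, he⟩ := chain P hP _ a b hab rfl
  have hcast : (vAt P a : ℤ) = (vAt P b : ℤ) +
      ((P.roots.filter (fun x => a < x ∧ x ≤ b)).card : ℤ) + 2 * (e : ℤ) := by
    exact_mod_cast he
  constructor
  · omega
  · show Int.ModEq 2 _ _
    unfold Int.ModEq
    omega
end

section
/- Finiteness of zeros: for every n ≥ 0 and every function f : [a, b] → ℝ that is n times differentiable on [a, b] (one-sidedly at the endpoints) and whose n-th derivative f⁽ⁿ⁾ never vanishes on [a, b], the set of zeros of f in [a, b] is finite. -/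
/-- `v(f, t, n)`: number of sign changes in the sequence `(f(t), f'(t), …, f⁽ⁿ⁾(t))`
after deleting its zero entries, where the derivatives are taken within the set `s`
(one-sidedly at its endpoints). -/
noncomputable def vF (n : ℕ) (f : ℝ → ℝ) (s : Set ℝ) (t : ℝ) : ℕ :=
  signChanges (List.ofFn fun i : Fin (n + 1) => iteratedDerivWithin (i : ℕ) f s t)

open Set Filter Topology

/-- Rolle step, right version: if zeros of `g` accumulate at `c` from the right,
then so do zeros of `derivWithin g (Icc a b)`. -/
lemma step_right (g : ℝ → ℝ) (a b c : ℝ)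
    (hg : ∀ x ∈ Set.Icc a b, DifferentiableWithinAt ℝ g (Set.Icc a b) x)
    (h : (𝓝[>] c ⊓ 𝓟 {x ∈ Set.Icc a b | g x = 0}).NeBot) :
    (𝓝[>] c ⊓ 𝓟 {x ∈ Set.Icc a b | derivWithin g (Set.Icc a b) x = 0}).NeBot := by
  rw [Filter.inf_principal_neBot_iff] at h ⊢
  intro U hU
  rcases mem_nhdsGT_iff_exists_Ioo_subset.1 hU with ⟨u, hu, hsub⟩
  obtain ⟨x, hxU, hxm, hx0⟩ := h (Ioo c u) (Ioo_mem_nhdsGT_of_mem ⟨le_refl c, hu⟩)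
  obtain ⟨y, hyU, hym, hy0⟩ := h (Ioo c x) (Ioo_mem_nhdsGT_of_mem ⟨le_refl c, hxU.1⟩)
  have hyx : y < x := hyU.2
  have hcont : ContinuousOn g (Set.Icc y x) := fun z hz =>
    ((hg z (Icc_subset_Icc hym.1 hxm.2 hz)).continuousWithinAt).mono
      (Icc_subset_Icc hym.1 hxm.2)
  obtain ⟨z, hz, hz0⟩ := exists_deriv_eq_zero hyx hcont (hy0.trans hx0.symm)
  have hzm : z ∈ Set.Icc a b := ⟨hym.1.trans hz.1.le, hz.2.le.trans hxm.2⟩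
  have hnhds : Set.Icc a b ∈ 𝓝 z :=
    mem_of_superset (Ioo_mem_nhds (lt_of_le_of_lt hym.1 hz.1) (lt_of_lt_of_le hz.2 hxm.2))
      Ioo_subset_Icc_self
  refine ⟨z, hsub ⟨hyU.1.trans hz.1, hz.2.trans hxU.2⟩, hzm, ?_⟩
  rw [derivWithin_of_mem_nhds hnhds]; exact hz0

/-- Rolle step, left version. -/
lemma step_left (g : ℝ → ℝ) (a b c : ℝ)
    (hg : ∀ x ∈ Set.Icc a b, DifferentiableWithinAt ℝ g (Set.Icc a b) x)
    (h : (𝓝[<] c ⊓ 𝓟 {x ∈ Set.Icc a b | g x = 0}).NeBot) :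
    (𝓝[<] c ⊓ 𝓟 {x ∈ Set.Icc a b | derivWithin g (Set.Icc a b) x = 0}).NeBot := by
  rw [Filter.inf_principal_neBot_iff] at h ⊢
  intro U hU
  rcases mem_nhdsLT_iff_exists_Ioo_subset.1 hU with ⟨u, hu, hsub⟩
  obtain ⟨x, hxU, hxm, hx0⟩ := h (Ioo u c) (Ioo_mem_nhdsLT_of_mem ⟨hu, le_refl c⟩)
  obtain ⟨y, hyU, hym, hy0⟩ := h (Ioo x c) (Ioo_mem_nhdsLT_of_mem ⟨hxU.2, le_refl c⟩)
  have hxy : x < y := hyU.1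
  have hcont : ContinuousOn g (Set.Icc x y) := fun z hz =>
    ((hg z (Icc_subset_Icc hxm.1 hym.2 hz)).continuousWithinAt).mono
      (Icc_subset_Icc hxm.1 hym.2)
  obtain ⟨z, hz, hz0⟩ := exists_deriv_eq_zero hxy hcont (hx0.trans hy0.symm)
  have hzm : z ∈ Set.Icc a b := ⟨hxm.1.trans hz.1.le, hz.2.le.trans hym.2⟩
  have hnhds : Set.Icc a b ∈ 𝓝 z :=
    mem_of_superset (Ioo_mem_nhds (lt_of_le_of_lt hxm.1 hz.1) (lt_of_lt_of_le hz.2 hym.2))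
      Ioo_subset_Icc_self
  refine ⟨z, hsub ⟨hxU.1.trans hz.1, hz.2.trans hyU.2⟩, hzm, ?_⟩
  rw [derivWithin_of_mem_nhds hnhds]; exact hz0

/-- Finiteness of zeros: if `f` is `n` times differentiable on `[a, b]` (one-sidedly at
the endpoints) and its `n`-th derivative never vanishes on `[a, b]`, then the set of
zeros of `f` in `[a, b]` is finite. -/
theorem finite_zeros (f : ℝ → ℝ) (a b : ℝ) (hab : a ≤ b) (n : ℕ)
    (hdiff : ∀ i < n, ∀ x ∈ Set.Icc a b,
      DifferentiableWithinAt ℝ (iteratedDerivWithin i f (Set.Icc a b)) (Set.Icc a b) x)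
    (hne : ∀ x ∈ Set.Icc a b, iteratedDerivWithin n f (Set.Icc a b) x ≠ 0) :
    {x ∈ Set.Icc a b | f x = 0}.Finite := by
  rcases eq_or_lt_of_le hab with rfl | hab'
  · exact (Set.finite_singleton a).subset fun x hx => by
      simpa using ((Set.mem_Icc.1 hx.1).1.antisymm (Set.mem_Icc.1 hx.1).2).symm
  set s := Set.Icc a b with hs
  have huniq : UniqueDiffOn ℝ s := uniqueDiffOn_Icc hab'
  by_contra hinf
  replace hinf : {x ∈ s | f x = 0}.Infinite := hinf
  -- accumulation point
  obtain ⟨c, hcm, hacc⟩ := (hinf.exists_accPt_of_subset_isCompact isCompact_Icc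
    (fun x hx => hx.1))
  -- zero sets of iterated derivatives
  set Z : ℕ → Set ℝ := fun i => {x ∈ s | iteratedDerivWithin i f s x = 0} with hZ
  have hZ0 : {x ∈ s | f x = 0} = Z 0 := by
    ext x; simp [hZ, iteratedDerivWithin_zero]
  have hZn : Z n = ∅ := by
    ext x; simp only [hZ, Set.mem_setOf_eq, Set.mem_empty_iff_false, iff_false, not_and]
    exact fun hx => hne x hx
  -- AccPt unfolding
  have hacc' : (𝓝[≠] c ⊓ 𝓟 (Z 0)).NeBot := by
    rw [← hZ0]
    have : ClusterPt c (𝓟 {c}ᶜ ⊓ 𝓟 {x ∈ s | f x = 0}) := accPt_iff_clusterPt.1 hacc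
    rw [ClusterPt, ← inf_assoc] at this
    exact this
  rw [← nhdsLT_sup_nhdsGT, inf_sup_right, Filter.sup_neBot] at hacc'
  -- one-sided induction
  have key : ∀ (L : Filter ℝ),
      (∀ (g : ℝ → ℝ), (∀ x ∈ s, DifferentiableWithinAt ℝ g s x) →
        (L ⊓ 𝓟 {x ∈ s | g x = 0}).NeBot →
        (L ⊓ 𝓟 {x ∈ s | derivWithin g s x = 0}).NeBot) →
      (L ⊓ 𝓟 (Z 0)).NeBot → False := by
    intro L hstep h0
    have : ∀ i ≤ n, (L ⊓ 𝓟 (Z i)).NeBot := by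
      intro i hi
      induction i with
      | zero => exact h0
      | succ j ih =>
        have hj : j < n := Nat.lt_of_succ_le hi
        have := hstep (iteratedDerivWithin j f s) (hdiff j hj) (ih hj.le)
        have heq : Z (j + 1) = {x ∈ s | derivWithin (iteratedDerivWithin j f s) s x = 0} := by
          ext x
          simp only [hZ, Set.mem_setOf_eq, and_congr_right_iff]
          intro hx
          rw [iteratedDerivWithin_succ]
        rwa [heq]
    have := this n le_rfl
    rw [hZn] at this
    rw [Filter.principal_empty, inf_bot_eq] at this
    exact this.ne rfl
  rcases hacc' with h | h
  · exact key (𝓝[<] c) (fun g hg => step_left g a b c hg) h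
  · exact key (𝓝[>] c) (fun g hg => step_right g a b c hg) h
end

section
/- Local behavior at a non-zero point (Claim 1): let f : [a, b] → ℝ be n times differentiable on [a, b] with f⁽ⁿ⁾ never vanishing and of constant sign on [a, b], and let α ∈ [a, b] with f(α) ≠ 0. Then there exists η > 0 such that for all u, v ∈ [a, b] with α − η < u ≤ α ≤ v < α + η, the function f has no zero in [u, v] and v(f, u, n) ≥ v(f, v, n). -/
namespace SC

noncomputable def chg (x y : ℝ) : ℕ := if x * y < 0 then 1 else 0

noncomputable def c : List ℝ → ℕ
  | [] => 0
  | [_] => 0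
  | x :: y :: t => chg x y + c (y :: t)

@[simp] lemma c_nil : c [] = 0 := by simp [c]
@[simp] lemma c_one (x : ℝ) : c [x] = 0 := by simp [c]
@[simp] lemma c_two (x y : ℝ) (t : List ℝ) : c (x :: y :: t) = chg x y + c (y :: t) := by
  rw [c]

lemma chg_zero_right (x : ℝ) : chg x 0 = 0 := by simp [chg]

lemma c_cons (x : ℝ) (l : List ℝ) : c (x :: l) = chg x l.headI + c l := by
  cases l with
  | nil =>
    rw [List.headI_nil, show (default : ℝ) = 0 from rfl, chg_zero_right]
    simp
  | cons y t => simp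

lemma countP_zip_eq_c : ∀ l : List ℝ,
    (l.zip l.tail).countP (fun p => decide (p.1 * p.2 < 0)) = c l
  | [] => rfl
  | [x] => rfl
  | x :: y :: t => by
    have h := countP_zip_eq_c (y :: t)
    simp only [List.tail_cons, List.zip_cons_cons, List.countP_cons] at *
    rw [c_two, h, chg]
    split_ifs <;> simp_all <;> omega

lemma signChanges_eq_c (l : List ℝ) :
    signChanges l = c (l.filter (fun x => decide (x ≠ 0))) := by
  unfold signChanges
  exact countP_zip_eq_c _

lemma chg_congr {x y x' y' : ℝ} (h : 0 < x * x') (h' : 0 < y * y') :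
    chg x y = chg x' y' := by
  unfold chg
  split_ifs with h1 h2 h2
  · rfl
  · exfalso; nlinarith
  · exfalso; nlinarith
  · rfl

lemma c_map_congr {β : Type*} (F G : β → ℝ) :
    ∀ Z : List β, (∀ p ∈ Z, 0 < F p * G p) → c (Z.map F) = c (Z.map G)
  | [], _ => rfl
  | [p], _ => rfl
  | p :: q :: Z, h => by
    simp only [List.map_cons, c_two]
    rw [show (F q :: List.map F Z) = List.map F (q :: Z) from rfl,
        show (G q :: List.map G Z) = List.map G (q :: Z) from rfl,
        c_map_congr F G (q :: Z) (fun r hr => h r (by simp at hr ⊢; tauto))]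
    congr 1
    exact chg_congr (h p (by simp)) (h q (by simp))

lemma c_le_cons (a : ℝ) (l : List ℝ) : c l ≤ c (a :: l) := by
  rw [c_cons]; omega

lemma chg_triangle {x a z : ℝ} (hx : x ≠ 0) (ha : a ≠ 0) :
    chg x z ≤ chg x a + chg a z := by
  unfold chg
  by_cases h1 : x * z < 0
  · by_cases h2 : x * a < 0
    · simp only [if_pos h1, if_pos h2]; omega
    · have hxa : 0 < x * a :=
        lt_of_le_of_ne (not_lt.mp h2) (Ne.symm (mul_ne_zero hx ha))
      have h3 : a * z < 0 := by nlinarith [mul_pos hxa (neg_pos.mpr h1), sq_nonneg x]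
      simp only [if_pos h1, if_neg h2, if_pos h3]
      omega
  · simp only [if_neg h1]
    exact Nat.zero_le _

lemma c_le_insert (x a : ℝ) (l : List ℝ) (hx : x ≠ 0) (ha : a ≠ 0) :
    c (x :: l) ≤ chg x a + c (a :: l) := by
  rw [c_cons, c_cons]
  have := chg_triangle (z := l.headI) hx ha
  omega

lemma c_sublist : ∀ {l' l : List ℝ}, List.Sublist l' l → (∀ y ∈ l, y ≠ 0) →
    c l' ≤ c l ∧ ∀ x : ℝ, x ≠ 0 → c (x :: l') ≤ c (x :: l) := by
  intro l' l h
  induction h with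
  | slnil => intro _; exact ⟨le_refl _, fun x _ => le_refl _⟩
  | @cons l₁ l₂ a h ih =>
    intro hz
    have hz₂ : ∀ y ∈ l₂, y ≠ 0 := fun y hy => hz y (by simp [hy])
    have ha : a ≠ 0 := hz a (by simp)
    obtain ⟨ih1, ih2⟩ := ih hz₂
    constructor
    · exact ih1.trans (c_le_cons a l₂)
    · intro x hx
      calc c (x :: l₁) ≤ c (x :: l₂) := ih2 x hx
        _ ≤ chg x a + c (a :: l₂) := c_le_insert x a l₂ hx ha
        _ = c (x :: a :: l₂) := (c_two x a l₂).symm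
  | @cons_cons l₁ l₂ a h ih =>
    intro hz
    have hz₂ : ∀ y ∈ l₂, y ≠ 0 := fun y hy => hz y (by simp [hy])
    have ha : a ≠ 0 := hz a (by simp)
    obtain ⟨ih1, ih2⟩ := ih hz₂
    have key : c (a :: l₁) ≤ c (a :: l₂) := ih2 a ha
    refine ⟨key, fun x hx => ?_⟩
    rw [c_two, c_two]
    omega

/-- The "right-side" relation. -/
inductive RR : List ℝ → List ℝ → Prop
  | single (x y : ℝ) (hx : x ≠ 0) (hxy : 0 < x * y) : RR [x] [y]
  | cons (x y : ℝ) (L M : List ℝ) (hx : x ≠ 0) (hxy : 0 < x * y) (h : RR L M) :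
      RR (x :: L) (y :: M)
  | zero (y z : ℝ) (L M : List ℝ) (hyz : 0 < y * z) (h : RR L (z :: M)) :
      RR ((0 : ℝ) :: L) (y :: z :: M)

lemma RR.c_le {L M : List ℝ} (h : RR L M) :
    c M ≤ c (L.filter (fun x => decide (x ≠ 0))) ∧
      0 < M.headI * (L.filter (fun x => decide (x ≠ 0))).headI := by
  induction h with
  | single x y hx hxy =>
    rw [List.filter_cons_of_pos (by simpa using hx)]
    exact ⟨by simp, by simpa [mul_comm] using hxy⟩
  | cons x y L M hx hxy h ih =>
    obtain ⟨ih1, ih2⟩ := ih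
    rw [List.filter_cons_of_pos (by simpa using hx)]
    constructor
    · rw [c_cons, c_cons,
        chg_congr (x := y) (x' := x) (y := M.headI)
          (y' := (L.filter (fun x => decide (x ≠ 0))).headI)
          (by nlinarith) ih2]
      omega
    · simpa [mul_comm] using hxy
  | zero y z L M hyz h ih =>
    obtain ⟨ih1, ih2⟩ := ih
    rw [List.filter_cons_of_neg (by simp)]
    constructor
    · rw [c_two, show chg y z = 0 from by simp [chg, not_lt.mpr hyz.le, lt_asymm hyz]]
      simpa using ih1
    · simp only [List.headI_cons] at ih2 ⊢
      nlinarith [mul_pos hyz ih2, sq_nonneg z]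

lemma RR_of : ∀ (L M : List ℝ), L.length = M.length → L ≠ [] →
    (∀ i (h : i < L.length), i + 1 = L.length → L[i] ≠ 0) →
    (∀ i (h : i < L.length) (h' : i < M.length), L[i] ≠ 0 → 0 < L[i] * M[i]) →
    (∀ i (h : i + 1 < L.length) (h1 : i < M.length) (h2 : i + 1 < M.length),
      L[i] = 0 → 0 < M[i] * M[i + 1]) →
    RR L M
  | [], M, hlen, hne, _, _, _ => absurd rfl hne
  | x :: L2, [], hlen, _, _, _, _ => by simp at hlen
  | [x], y :: M2, hlen, _, hlast, h1, _ => by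
    have hM2 : M2 = [] := by simpa using List.length_eq_zero_iff.mp (by simpa using hlen.symm)
    subst hM2
    exact RR.single x y (hlast 0 (by simp) (by simp)) (h1 0 (by simp) (by simp)
      (hlast 0 (by simp) (by simp)))
  | x :: x2 :: L3, y :: M2, hlen, _, hlast, h1, h2 => by
    have hlen' : (x2 :: L3).length = M2.length := by simpa using hlen
    by_cases hx : x = 0
    · obtain ⟨z, M3, rfl⟩ : ∃ z M3, M2 = z :: M3 := by
        cases M2 with
        | nil => simp at hlen'
        | cons z M3 => exact ⟨z, M3, rfl⟩
      have hrec : RR (x2 :: L3) (z :: M3) := by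
        apply RR_of _ _ hlen' (by simp)
        · intro i h hi
          have := hlast (i + 1) (by simpa using Nat.succ_lt_succ h) (by simpa using hi)
          simpa using this
        · intro i h h' hne
          have := h1 (i + 1) (by simpa using Nat.succ_lt_succ h)
            (by simpa using Nat.succ_lt_succ h') (by simpa using hne)
          simpa using this
        · intro i h ha hb hz
          have := h2 (i + 1) (by simpa using Nat.succ_lt_succ h)
            (by simpa using Nat.succ_lt_succ ha) (by simpa using Nat.succ_lt_succ hb)
            (by simpa using hz)
          simpa using this
      have hyz : 0 < y * z := by
        have := h2 0 (by simp) (by simp) (by simp) (by simpa using hx)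
        simpa using this
      rw [show x = (0:ℝ) from hx]
      exact RR.zero y z (x2 :: L3) M3 hyz hrec
    · have hxy : 0 < x * y := by
        have := h1 0 (by simp) (by simp) (by simpa using hx)
        simpa using this
      refine RR.cons x y _ _ hx hxy ?_
      apply RR_of _ _ hlen' (by simp)
      · intro i h hi
        have := hlast (i + 1) (by simpa using Nat.succ_lt_succ h) (by simpa using hi)
        simpa using this
      · intro i h h' hne
        have := h1 (i + 1) (by simpa using Nat.succ_lt_succ h)
          (by simpa using Nat.succ_lt_succ h') (by simpa using hne)
        simpa using this
      · intro i h ha hb hz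
        have := h2 (i + 1) (by simpa using Nat.succ_lt_succ h)
          (by simpa using Nat.succ_lt_succ ha) (by simpa using Nat.succ_lt_succ hb)
          (by simpa using hz)
        simpa using this

end SC

namespace SC

lemma key (a b α : ℝ) (hab : a < b) (hα : α ∈ Set.Icc a b) (n : ℕ) (g : ℕ → ℝ → ℝ)
    (hg' : ∀ i < n, ∀ x ∈ Set.Icc a b, HasDerivWithinAt (g i) (g (i + 1) x) (Set.Icc a b) x)
    (hgn : ∀ x ∈ Set.Icc a b, 0 < g n x * g n α) :
    ∃ η > (0 : ℝ), ∃ σ : ℕ → ℝ,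
      (∀ i, σ i ≠ 0) ∧
      (∀ i, g i α ≠ 0 → σ i = g i α) ∧
      (∀ i ≤ n, g i α = 0 → i < n ∧ σ i = σ (i + 1)) ∧
      (∀ i ≤ n, ∀ t ∈ Set.Icc a b, |t - α| < η → g i α ≠ 0 → 0 < g i t * g i α) ∧
      (∀ i ≤ n, g i α = 0 → ∀ t ∈ Set.Icc a b, α < t → t < α + η → 0 < g i t * σ i) := by
  classical
  have hgnα : g n α ≠ 0 := by
    intro h
    have := hgn α hα
    rw [h] at this
    simp at this
  set σ : ℕ → ℝ := fun i =>
    if h : ∃ j, i ≤ j ∧ g j α ≠ 0 then g (Nat.find h) α else 1 with hσdef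
  have hσne : ∀ i, σ i ≠ 0 := by
    intro i
    simp only [hσdef]
    by_cases h : ∃ j, i ≤ j ∧ g j α ≠ 0
    · rw [dif_pos h]; exact (Nat.find_spec h).2
    · rw [dif_neg h]; norm_num
  have hσeq : ∀ i, g i α ≠ 0 → σ i = g i α := by
    intro i hi
    have h : ∃ j, i ≤ j ∧ g j α ≠ 0 := ⟨i, le_refl i, hi⟩
    simp only [hσdef]
    simp only [dif_pos h]
    have h1 : Nat.find h ≤ i := Nat.find_min' h ⟨le_refl i, hi⟩
    have h2 : i ≤ Nat.find h := (Nat.find_spec h).1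
    rw [le_antisymm h1 h2]
  have hσsucc : ∀ i ≤ n, g i α = 0 → i < n ∧ σ i = σ (i + 1) := by
    intro i hin hi
    have hlt : i < n := lt_of_le_of_ne hin (by rintro rfl; exact hgnα hi)
    refine ⟨hlt, ?_⟩
    have h : ∃ j, i ≤ j ∧ g j α ≠ 0 := ⟨n, hin, hgnα⟩
    have h' : ∃ j, i + 1 ≤ j ∧ g j α ≠ 0 := ⟨n, hlt, hgnα⟩
    have e1 : Nat.find h ≤ Nat.find h' :=
      Nat.find_min' h ⟨le_trans (Nat.le_succ i) (Nat.find_spec h').1, (Nat.find_spec h').2⟩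
    have e2 : Nat.find h' ≤ Nat.find h := by
      apply Nat.find_min' h'
      have hge : i ≤ Nat.find h := (Nat.find_spec h).1
      have hne' : Nat.find h ≠ i := by
        intro e
        exact (Nat.find_spec h).2 (by rw [e]; exact hi)
      exact ⟨by omega, (Nat.find_spec h).2⟩
    simp only [hσdef]
    simp only [dif_pos h, dif_pos h']
    rw [le_antisymm e1 e2]
  -- the downward induction
  have main : ∀ d : ℕ, ∃ η > (0 : ℝ), ∀ i, n ≤ i + d → i ≤ n →
      (∀ t ∈ Set.Icc a b, |t - α| < η → g i α ≠ 0 → 0 < g i t * g i α) ∧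
      (g i α = 0 → ∀ t ∈ Set.Icc a b, α < t → t < α + η → 0 < g i t * σ i) := by
    intro d
    induction d with
    | zero =>
      refine ⟨1, one_pos, ?_⟩
      intro i hi1 hi2
      have : i = n := by omega
      subst this
      exact ⟨fun t ht _ _ => hgn t ht, fun hz => absurd hz hgnα⟩
    | succ d ih =>
      obtain ⟨η₀, hη₀, H⟩ := ih
      by_cases hd : n ≤ d
      · exact ⟨η₀, hη₀, fun i hid hin => H i (by omega) hin⟩
      · set k := n - (d + 1) with hk
        have hkn : k < n := by omega
        by_cases hgk : g k α = 0
        · -- the new index needs only the Right property, with the same η₀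
          refine ⟨η₀, hη₀, ?_⟩
          intro i hid hin
          by_cases hik : n ≤ i + d
          · exact H i hik hin
          · have hieq : i = k := by omega
            subst hieq
            refine ⟨fun _ _ _ h => absurd hgk h, ?_⟩
            intro _ t hts hαt htη
            have hsub : Set.Icc α t ⊆ Set.Icc a b :=
              Set.Icc_subset_Icc hα.1 hts.2
            have hkey : ∀ x ∈ Set.Ioo α t, 0 < g (k + 1) x * σ (k + 1) := by
              intro x hx
              have hxs : x ∈ Set.Icc a b :=
                hsub ⟨le_of_lt hx.1, le_of_lt hx.2⟩
              by_cases hz : g (k + 1) α = 0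
              · exact (H (k + 1) (by omega) (by omega)).2 hz x hxs hx.1
                  (lt_trans hx.2 htη)
              · rw [hσeq (k + 1) hz]
                apply (H (k + 1) (by omega) (by omega)).1 x hxs ?_ hz
                rw [abs_lt]
                constructor <;> nlinarith [hx.1, hx.2, hη₀]
            have hderiv : ∀ x ∈ interior (Set.Icc α t), deriv (g k) x = g (k + 1) x := by
              intro x hx
              rw [interior_Icc] at hx
              have hxo : x ∈ Set.Ioo a b :=
                ⟨lt_of_le_of_lt hα.1 hx.1, lt_of_lt_of_le hx.2 hts.2⟩
              have hD : HasDerivAt (g k) (g (k + 1) x) x :=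
                (hg' k hkn x (Set.Ioo_subset_Icc_self hxo)).hasDerivAt
                  (Icc_mem_nhds hxo.1 hxo.2)
              exact hD.deriv
            have hcont : ContinuousOn (g k) (Set.Icc α t) := fun y hy =>
              ((hg' k hkn y (hsub hy)).continuousWithinAt).mono hsub
            have hσs := hσsucc k (le_of_lt hkn) hgk
            rcases lt_or_gt_of_ne (hσne (k + 1)) with hneg | hpos
            · -- σ (k+1) < 0 : g (k+1) < 0 on Ioo, g k strictly decreasing, g k t < 0
              have hmono : StrictAntiOn (g k) (Set.Icc α t) := by
                apply strictAntiOn_of_deriv_neg (convex_Icc α t) hcont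
                intro x hx
                rw [hderiv x hx]
                rw [interior_Icc] at hx
                nlinarith [hkey x hx]
              have hlt0 : g k t < g k α :=
                hmono (Set.left_mem_Icc.mpr (le_of_lt hαt))
                  (Set.right_mem_Icc.mpr (le_of_lt hαt)) hαt
              rw [hgk] at hlt0
              rw [hσs.2]
              nlinarith
            · have hmono : StrictMonoOn (g k) (Set.Icc α t) := by
                apply strictMonoOn_of_deriv_pos (convex_Icc α t) hcont
                intro x hx
                rw [hderiv x hx]
                rw [interior_Icc] at hx
                nlinarith [hkey x hx]
              have hlt0 : g k α < g k t :=
                hmono (Set.left_mem_Icc.mpr (le_of_lt hαt))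
                  (Set.right_mem_Icc.mpr (le_of_lt hαt)) hαt
              rw [hgk] at hlt0
              rw [hσs.2]
              nlinarith
        · -- new index is nonzero at α : use continuity
          have hc : ContinuousWithinAt (g k) (Set.Icc a b) α :=
            (hg' k hkn α hα).continuousWithinAt
          rw [Metric.continuousWithinAt_iff] at hc
          obtain ⟨δ, hδ, hcδ⟩ := hc (|g k α|) (abs_pos.mpr hgk)
          refine ⟨min η₀ δ, lt_min hη₀ hδ, ?_⟩
          intro i hid hin
          by_cases hik : n ≤ i + d
          · obtain ⟨H1, H2⟩ := H i hik hin
            constructor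
            · intro t hts htη hne
              exact H1 t hts (lt_of_lt_of_le htη (min_le_left _ _)) hne
            · intro hz t hts hαt htη
              exact H2 hz t hts hαt (lt_of_lt_of_le htη (by
                have := min_le_left η₀ δ; linarith))
          · have hieq : i = k := by omega
            subst hieq
            refine ⟨?_, fun hz => absurd hz hgk⟩
            intro t hts htη _
            have hdist : dist (g k t) (g k α) < |g k α| := by
              apply hcδ hts
              rw [Real.dist_eq]
              exact lt_of_lt_of_le htη (min_le_right _ _)
            rw [Real.dist_eq, abs_sub_lt_iff] at hdist
            rcases lt_or_gt_of_ne hgk with hb | hb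
            · rw [abs_of_neg hb] at hdist
              nlinarith [hdist.1, hdist.2]
            · rw [abs_of_pos hb] at hdist
              nlinarith [hdist.1, hdist.2]
  obtain ⟨η, hη, H⟩ := main n
  refine ⟨η, hη, σ, hσne, hσeq, hσsucc, ?_, ?_⟩
  · intro i hin t hts htη hne
    exact (H i (by omega) hin).1 t hts htη hne
  · intro i hin hz t hts hαt htη
    exact (H i (by omega) hin).2 hz t hts hαt htη

end SC

namespace SC

lemma side_u (n : ℕ) (A B : ℕ → ℝ)
    (hmid : ∀ i ≤ n, A i ≠ 0 → 0 < B i * A i) :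
    c ((List.ofFn fun i : Fin (n + 1) => A (i : ℕ)).filter fun x => decide (x ≠ 0)) ≤
      c ((List.ofFn fun i : Fin (n + 1) => B (i : ℕ)).filter fun x => decide (x ≠ 0)) := by
  classical
  set P : ℝ → Bool := fun x => decide (x ≠ 0) with hP
  set Z : List (ℝ × ℝ) := List.ofFn (fun i : Fin (n + 1) => (A (i : ℕ), B (i : ℕ))) with hZ
  have hmem : ∀ p ∈ Z, ∃ i : Fin (n + 1), p = (A (i : ℕ), B (i : ℕ)) := by
    intro p hp
    rw [hZ, List.mem_ofFn] at hp
    obtain ⟨i, hi⟩ := hp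
    exact ⟨i, hi.symm⟩
  have hA : Z.map Prod.fst = List.ofFn fun i : Fin (n + 1) => A (i : ℕ) := by
    rw [hZ, List.map_ofFn]; rfl
  have hB : Z.map Prod.snd = List.ofFn fun i : Fin (n + 1) => B (i : ℕ) := by
    rw [hZ, List.map_ofFn]; rfl
  rw [← hA, ← hB, List.filter_map, List.filter_map]
  have step1 : c ((Z.filter (P ∘ Prod.fst)).map Prod.fst) =
      c ((Z.filter (P ∘ Prod.fst)).map Prod.snd) := by
    apply c_map_congr
    intro p hp
    rw [List.mem_filter] at hp
    obtain ⟨i, rfl⟩ := hmem p hp.1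
    have hA0 : A (i : ℕ) ≠ 0 := by simpa [hP] using hp.2
    have := hmid (i : ℕ) (by omega) hA0
    simp only
    nlinarith
  rw [step1]
  have hfe : Z.filter (P ∘ Prod.fst) = Z.filter (fun p => P p.1 && P p.2) := by
    apply List.filter_congr
    intro p hp
    obtain ⟨i, rfl⟩ := hmem p hp
    by_cases hA0 : A (i : ℕ) ≠ 0
    · have hB0 : B (i : ℕ) ≠ 0 := by
        have := hmid (i : ℕ) (by omega) hA0
        intro h0; rw [h0] at this; simp at this
      simp [hP, hA0, hB0]
    · simp [hP, not_not.mp hA0]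
  have hsub : List.Sublist ((Z.filter (P ∘ Prod.fst)).map Prod.snd)
      ((Z.filter (fun p => P p.2)).map Prod.snd) := by
    rw [hfe]
    apply List.Sublist.map
    apply List.monotone_filter_right
    intro p hp
    simp only [Bool.and_eq_true] at hp
    exact hp.2
  have hnz : ∀ y ∈ (Z.filter (fun p => P p.2)).map Prod.snd, y ≠ 0 := by
    intro y hy
    rw [List.mem_map] at hy
    obtain ⟨p, hp, rfl⟩ := hy
    rw [List.mem_filter] at hp
    simpa [hP] using hp.2
  exact (c_sublist hsub hnz).1

lemma side_v (n : ℕ) (A B : ℕ → ℝ)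
    (hlast : A n ≠ 0)
    (hmid : ∀ i ≤ n, A i ≠ 0 → 0 < B i * A i)
    (hBne : ∀ i ≤ n, B i ≠ 0)
    (hz : ∀ i < n, A i = 0 → 0 < B i * B (i + 1)) :
    c ((List.ofFn fun i : Fin (n + 1) => B (i : ℕ)).filter fun x => decide (x ≠ 0)) ≤
      c ((List.ofFn fun i : Fin (n + 1) => A (i : ℕ)).filter fun x => decide (x ≠ 0)) := by
  classical
  have hfB : (List.ofFn fun i : Fin (n + 1) => B (i : ℕ)).filter (fun x => decide (x ≠ 0)) =
      List.ofFn fun i : Fin (n + 1) => B (i : ℕ) := by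
    apply List.filter_eq_self.mpr
    intro y hy
    rw [List.mem_ofFn] at hy
    obtain ⟨i, rfl⟩ := hy
    simpa using hBne (i : ℕ) (by omega)
  rw [hfB]
  have hRR : RR (List.ofFn fun i : Fin (n + 1) => A (i : ℕ))
      (List.ofFn fun i : Fin (n + 1) => B (i : ℕ)) := by
    apply RR_of
    · simp
    · intro h
      apply_fun List.length at h
      simp at h
    · intro i h hi
      simp only [List.length_ofFn] at h hi
      have : i = n := by omega
      subst this
      simp only [List.getElem_ofFn]
      simpa using hlast
    · intro i h h' hne
      simp only [List.length_ofFn] at h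
      simp only [List.getElem_ofFn] at hne ⊢
      have := hmid i (by omega) hne
      nlinarith
    · intro i h h1 h2 hzero
      simp only [List.length_ofFn] at h
      simp only [List.getElem_ofFn] at hzero ⊢
      exact hz i (by omega) hzero
  exact hRR.c_le.1

end SC

open SC in
/-- Local behavior at a non-zero point (Claim 1): if `f` is `n` times differentiable on
`[a, b]` with `f⁽ⁿ⁾` never vanishing and of constant sign, and `α ∈ [a, b]` satisfies
`f(α) ≠ 0`, then for all `u, v ∈ [a, b]` sufficiently close to `α` with `u ≤ α ≤ v`,
`f` has no zero in `[u, v]` and `v(f, u, n) ≥ v(f, v, n)`. -/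
theorem claim_one (f : ℝ → ℝ) (a b : ℝ) (hab : a ≤ b) (n : ℕ)
    (hdiff : ∀ i < n, ∀ x ∈ Set.Icc a b,
      DifferentiableWithinAt ℝ (iteratedDerivWithin i f (Set.Icc a b)) (Set.Icc a b) x)
    (hne : ∀ x ∈ Set.Icc a b, iteratedDerivWithin n f (Set.Icc a b) x ≠ 0)
    (hsign : (∀ x ∈ Set.Icc a b, 0 < iteratedDerivWithin n f (Set.Icc a b) x) ∨
             (∀ x ∈ Set.Icc a b, iteratedDerivWithin n f (Set.Icc a b) x < 0))
    (α : ℝ) (hα : α ∈ Set.Icc a b) (hfα : f α ≠ 0) :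
    ∃ η > (0 : ℝ), ∀ u ∈ Set.Icc a b, ∀ v ∈ Set.Icc a b,
      α - η < u → u ≤ α → α ≤ v → v < α + η →
      (∀ x ∈ Set.Icc u v, f x ≠ 0) ∧
      vF n f (Set.Icc a b) v ≤ vF n f (Set.Icc a b) u := by
  rcases eq_or_lt_of_le hab with heq | hlt
  · -- degenerate case a = b
    refine ⟨1, one_pos, ?_⟩
    intro u hu v hv _ _ _ _
    rw [← heq] at hu hv hα
    have hu' : u = a := le_antisymm hu.2 hu.1
    have hv' : v = a := le_antisymm hv.2 hv.1
    have hα' : α = a := le_antisymm hα.2 hα.1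
    constructor
    · intro x hx
      rw [hu', hv'] at hx
      have hx' : x = a := le_antisymm hx.2 hx.1
      rw [hx', ← hα']
      exact hfα
    · rw [hu', hv']
  · -- main case a < b
    have hUD : UniqueDiffOn ℝ (Set.Icc a b) := uniqueDiffOn_Icc hlt
    have hg' : ∀ i < n, ∀ x ∈ Set.Icc a b,
        HasDerivWithinAt (iteratedDerivWithin i f (Set.Icc a b))
          (iteratedDerivWithin (i + 1) f (Set.Icc a b) x) (Set.Icc a b) x := by
      intro i hi x hx
      have h := (hdiff i hi x hx).hasDerivWithinAt
      rwa [← iteratedDerivWithin_succ] at h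
    have hgn : ∀ x ∈ Set.Icc a b,
        0 < iteratedDerivWithin n f (Set.Icc a b) x * iteratedDerivWithin n f (Set.Icc a b) α := by
      rcases hsign with h | h
      · exact fun x hx => mul_pos (h x hx) (h α hα)
      · exact fun x hx => mul_pos_of_neg_of_neg (h x hx) (h α hα)
    obtain ⟨η, hη, σ, hσne, hσeq, hσsucc, hMid, hRight⟩ :=
      SC.key a b α hlt hα n (fun i => iteratedDerivWithin i f (Set.Icc a b)) hg' hgn
    refine ⟨η, hη, ?_⟩
    intro u hu v hv h1 h2 h3 h4
    have hfα' : iteratedDerivWithin 0 f (Set.Icc a b) α ≠ 0 := by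
      simpa [iteratedDerivWithin_zero] using hfα
    have habsu : |u - α| < η := abs_lt.mpr ⟨by linarith, by linarith⟩
    have habsv : |v - α| < η := abs_lt.mpr ⟨by linarith, by linarith⟩
    constructor
    · intro x hx
      have hxs : x ∈ Set.Icc a b := ⟨le_trans hu.1 hx.1, le_trans hx.2 hv.2⟩
      have habs : |x - α| < η := abs_lt.mpr ⟨by linarith [hx.1], by linarith [hx.2]⟩
      have hpos := hMid 0 (Nat.zero_le n) x hxs habs hfα'
      intro hfx
      rw [iteratedDerivWithin_zero] at hpos
      rw [hfx] at hpos
      simp at hpos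
    · have hMidu : ∀ i ≤ n, iteratedDerivWithin i f (Set.Icc a b) α ≠ 0 →
          0 < iteratedDerivWithin i f (Set.Icc a b) u * iteratedDerivWithin i f (Set.Icc a b) α :=
        fun i hi hz => hMid i hi u hu habsu hz
      have hstepu : vF n f (Set.Icc a b) α ≤ vF n f (Set.Icc a b) u := by
        unfold vF
        rw [signChanges_eq_c, signChanges_eq_c]
        exact side_u n (fun i => iteratedDerivWithin i f (Set.Icc a b) α)
          (fun i => iteratedDerivWithin i f (Set.Icc a b) u) hMidu
      by_cases hvα : v = α
      · rw [hvα]; exact hstepu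
      · have hαv : α < v := lt_of_le_of_ne h3 (Ne.symm hvα)
        have hMidv : ∀ i ≤ n, iteratedDerivWithin i f (Set.Icc a b) α ≠ 0 →
            0 < iteratedDerivWithin i f (Set.Icc a b) v * iteratedDerivWithin i f (Set.Icc a b) α :=
          fun i hi hz => hMid i hi v hv habsv hz
        have hBne : ∀ i ≤ n, iteratedDerivWithin i f (Set.Icc a b) v ≠ 0 := by
          intro i hi
          by_cases hz : iteratedDerivWithin i f (Set.Icc a b) α = 0
          · have := hRight i hi hz v hv hαv (by linarith)
            intro h0; rw [h0] at this; simp at this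
          · have := hMidv i hi hz
            intro h0; rw [h0] at this; simp at this
        have hzv : ∀ i < n, iteratedDerivWithin i f (Set.Icc a b) α = 0 →
            0 < iteratedDerivWithin i f (Set.Icc a b) v *
              iteratedDerivWithin (i + 1) f (Set.Icc a b) v := by
          intro i hi hz
          have ha1 := hRight i (le_of_lt hi) hz v hv hαv (by linarith)
          have ha2 : 0 < iteratedDerivWithin (i + 1) f (Set.Icc a b) v * σ (i + 1) := by
            by_cases hz2 : iteratedDerivWithin (i + 1) f (Set.Icc a b) α = 0
            · exact hRight (i + 1) hi hz2 v hv hαv (by linarith)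
            · rw [hσeq (i + 1) hz2]
              exact hMidv (i + 1) hi hz2
          have hσs := (hσsucc i (le_of_lt hi) hz).2
          rw [hσs] at ha1
          nlinarith [mul_pos ha1 ha2, sq_nonneg (σ (i + 1)), hσne (i + 1)]
        have hstepv : vF n f (Set.Icc a b) v ≤ vF n f (Set.Icc a b) α := by
          unfold vF
          rw [signChanges_eq_c, signChanges_eq_c]
          exact side_v n (fun i => iteratedDerivWithin i f (Set.Icc a b) α)
            (fun i => iteratedDerivWithin i f (Set.Icc a b) v) (hne α hα) hMidv hBne hzv
        exact le_trans hstepv hstepu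
end

section
/- Local behavior at a zero (Claim 2): let f : [a, b] → ℝ be n times differentiable on [a, b] with f⁽ⁿ⁾ never vanishing and of constant sign on [a, b], and let α ∈ [a, b] be a zero of f of multiplicity μ (so μ < n). Then there exists η > 0 such that for all u, v ∈ [a, b] with α − η < u < α ≤ v < α + η, the sum of multiplicities of the zeros of f in [u, v] equals μ and v(f, u, n) ≥ v(f, v, n) + μ. -/
/-- Count of sign changes between consecutive entries (no zero-filtering). -/
noncomputable def chg (m : List ℝ) : ℕ :=
  (m.zip m.tail).countP (fun p => decide (p.1 * p.2 < 0))

/-- Filter out zero entries. -/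
noncomputable def nzf (l : List ℝ) : List ℝ := l.filter (fun x => decide (x ≠ 0))

/-- Number of leading zeros. -/
noncomputable def lz : List ℝ → ℕ
  | [] => 0
  | x :: t => if x = 0 then lz t + 1 else 0

lemma signChanges_eq_chg_nzf (l : List ℝ) : signChanges l = chg (nzf l) := rfl

lemma nzf_nil : nzf ([] : List ℝ) = [] := rfl

lemma nzf_cons_zero (s : List ℝ) : nzf ((0:ℝ) :: s) = nzf s := by
  simp [nzf]

lemma nzf_cons_nz {c : ℝ} (hc : c ≠ 0) (s : List ℝ) : nzf (c :: s) = c :: nzf s := by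
  simp [nzf, hc]

lemma nzf_eq_self {l : List ℝ} (h : ∀ x ∈ l, x ≠ 0) : nzf l = l :=
  List.filter_eq_self.mpr (fun a ha => by simpa using h a ha)

lemma chg_nil : chg ([] : List ℝ) = 0 := rfl
lemma chg_single (x : ℝ) : chg [x] = 0 := rfl

lemma chg_cons_cons (x y : ℝ) (m : List ℝ) :
    chg (x :: y :: m) = (if x * y < 0 then 1 else 0) + chg (y :: m) := by
  simp only [chg, List.tail_cons, List.zip_cons_cons, List.countP_cons]
  by_cases h : x * y < 0 <;> simp [h] <;> omega

lemma chg_le_cons (x : ℝ) (m : List ℝ) : chg m ≤ chg (x :: m) := by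
  cases m with
  | nil => simp [chg]
  | cons y t => rw [chg_cons_cons]; omega

lemma chg_cons_le (x : ℝ) (m : List ℝ) : chg (x :: m) ≤ chg m + 1 := by
  cases m with
  | nil => simp [chg]
  | cons y t => rw [chg_cons_cons]; split <;> omega

/-- Relation between the sign sequence `s` at `α` and the value sequence `l`
just to the left of `α`. -/
inductive RelL : List ℝ → List ℝ → Prop
  | single {c x : ℝ} (h : 0 < c * x) : RelL [c] [x]
  | cons_nz {c x : ℝ} (h : 0 < c * x) {s l : List ℝ} (h' : RelL s l) : RelL (c :: s) (x :: l)
  | cons_z {x y : ℝ} (hxy : x * y < 0) {s l : List ℝ} (h' : RelL s (y :: l)) :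
      RelL ((0:ℝ) :: s) (x :: y :: l)

/-- Same, for points to the right of `α`. -/
inductive RelR : List ℝ → List ℝ → Prop
  | single {c x : ℝ} (h : 0 < c * x) : RelR [c] [x]
  | cons_nz {c x : ℝ} (h : 0 < c * x) {s l : List ℝ} (h' : RelR s l) : RelR (c :: s) (x :: l)
  | cons_z {x y : ℝ} (hxy : 0 < x * y) {s l : List ℝ} (h' : RelR s (y :: l)) :
      RelR ((0:ℝ) :: s) (x :: y :: l)

lemma RelL.ne_nil {s l : List ℝ} (h : RelL s l) : l ≠ [] := by
  cases h <;> simp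

lemma RelL.all_nz {s l : List ℝ} (h : RelL s l) : ∀ x ∈ l, x ≠ 0 := by
  induction h with
  | @single c x h => intro z hz; simp at hz; subst hz; rintro rfl; simp at h
  | @cons_nz c x h s l h' ih =>
      intro z hz; rcases List.mem_cons.1 hz with rfl | hz
      · rintro rfl; simp at h
      · exact ih z hz
  | @cons_z x y hxy s l h' ih =>
      intro z hz; rcases List.mem_cons.1 hz with rfl | hz
      · rintro rfl; simp at hxy
      · exact ih z hz

lemma RelL.nzf_ne_nil {s l : List ℝ} (h : RelL s l) : nzf s ≠ [] := by
  induction h with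
  | @single c x h =>
      have hc : c ≠ (0:ℝ) := by rintro rfl; simp at h
      simp [nzf_cons_nz hc]
  | @cons_nz c x h s l h' ih =>
      have hc : c ≠ (0:ℝ) := by rintro rfl; simp at h
      simp [nzf_cons_nz hc]
  | cons_z hxy h' ih => rw [nzf_cons_zero]; exact ih

lemma RelL.head_sign {c : ℝ} {s l : List ℝ} (h : RelL (c :: s) l) (hc : c ≠ 0) :
    0 < c * l.headI := by
  cases h with
  | single h => exact h
  | cons_nz h h' => exact h
  | cons_z hxy h' => exact absurd rfl hc

lemma sign_transfer {a b x y : ℝ} (h1 : 0 < a * x) (h2 : 0 < b * y) :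
    (a * b < 0 ↔ x * y < 0) := by
  rcases mul_pos_iff.1 h1 with ⟨ha, hx⟩ | ⟨ha, hx⟩ <;>
    rcases mul_pos_iff.1 h2 with ⟨hb, hy⟩ | ⟨hb, hy⟩ <;>
  constructor <;> intro h3 <;> nlinarith

lemma RelL.chg_ge {s l : List ℝ} (h : RelL s l) : chg (nzf s) + lz s ≤ chg l := by
  induction h with
  | @single c x h =>
      have hc : c ≠ (0:ℝ) := by rintro rfl; simp at h
      simp [nzf_cons_nz hc, nzf_nil, chg_single, lz, hc]
  | @cons_nz c x h s l h' ih =>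
      have hc : c ≠ (0:ℝ) := by rintro rfl; simp at h
      rw [nzf_cons_nz hc s]
      simp only [lz, if_neg hc, Nat.add_zero]
      rcases Nat.eq_zero_or_pos (lz s) with hlz | hlz
      · -- head of s is nonzero
        have hsne : s ≠ [] := by rintro rfl; cases h'
        obtain ⟨d, s', rfl⟩ := List.exists_cons_of_ne_nil hsne
        have hd : d ≠ 0 := by intro hd; subst hd; simp [lz] at hlz
        obtain ⟨x', l', rfl⟩ := List.exists_cons_of_ne_nil h'.ne_nil
        have hdx : 0 < d * x' := by simpa using h'.head_sign hd
        rw [nzf_cons_nz hd] at ih ⊢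
        rw [chg_cons_cons, chg_cons_cons]
        simp only [lz, if_neg hd] at ih
        rcases (sign_transfer h hdx) with ⟨h1, h2⟩
        by_cases hcd : c * d < 0
        · rw [if_pos hcd, if_pos (h1 hcd)]; omega
        · rw [if_neg hcd, if_neg (fun hh => hcd (h2 hh))]; omega
      · calc chg (c :: nzf s) ≤ chg (nzf s) + 1 := chg_cons_le _ _
          _ ≤ chg (nzf s) + lz s := by omega
          _ ≤ chg l := by omega
          _ ≤ chg (x :: l) := chg_le_cons _ _
  | @cons_z x y hxy s l h' ih =>
      rw [nzf_cons_zero]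
      show chg (nzf s) + (if (0:ℝ) = 0 then lz s + 1 else 0) ≤ _
      rw [if_pos rfl, chg_cons_cons, if_pos hxy]
      omega

lemma RelR.ne_nil {s l : List ℝ} (h : RelR s l) : l ≠ [] := by
  cases h <;> simp

lemma RelR.all_nz {s l : List ℝ} (h : RelR s l) : ∀ x ∈ l, x ≠ 0 := by
  induction h with
  | @single c x h => intro z hz; simp at hz; subst hz; rintro rfl; simp at h
  | @cons_nz c x h s l h' ih =>
      intro z hz; rcases List.mem_cons.1 hz with rfl | hz
      · rintro rfl; simp at h
      · exact ih z hz
  | @cons_z x y hxy s l h' ih =>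
      intro z hz; rcases List.mem_cons.1 hz with rfl | hz
      · rintro rfl; simp at hxy
      · exact ih z hz

lemma RelR.head_sign {s l : List ℝ} (h : RelR s l) : 0 < (nzf s).headI * l.headI := by
  induction h with
  | @single c x h =>
      have hc : c ≠ (0:ℝ) := by rintro rfl; simp at h
      simpa [nzf_cons_nz hc] using h
  | @cons_nz c x h s l h' ih =>
      have hc : c ≠ (0:ℝ) := by rintro rfl; simp at h
      simpa [nzf_cons_nz hc] using h
  | @cons_z x y hxy s l h' ih =>
      rw [nzf_cons_zero]
      simp only [List.headI_cons] at ih ⊢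
      nlinarith [mul_pos ih hxy, sq_nonneg y, mul_self_nonneg ((nzf s).headI * x)]

lemma RelR.nzf_ne_nil {s l : List ℝ} (h : RelR s l) : nzf s ≠ [] := by
  induction h with
  | @single c x h =>
      have hc : c ≠ (0:ℝ) := by rintro rfl; simp at h
      simp [nzf_cons_nz hc]
  | @cons_nz c x h s l h' ih =>
      have hc : c ≠ (0:ℝ) := by rintro rfl; simp at h
      simp [nzf_cons_nz hc]
  | cons_z hxy h' ih => rw [nzf_cons_zero]; exact ih

lemma RelR.chg_eq {s l : List ℝ} (h : RelR s l) : chg l = chg (nzf s) := by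
  induction h with
  | @single c x h =>
      have hc : c ≠ (0:ℝ) := by rintro rfl; simp at h
      simp [nzf_cons_nz hc, nzf_nil, chg_single]
  | @cons_nz c x h s l h' ih =>
      have hc : c ≠ (0:ℝ) := by rintro rfl; simp at h
      have hsne : nzf s ≠ [] := h'.nzf_ne_nil
      obtain ⟨d, m, hm⟩ := List.exists_cons_of_ne_nil hsne
      obtain ⟨x', l', rfl⟩ := List.exists_cons_of_ne_nil h'.ne_nil
      have hdx : 0 < d * x' := by
        have := h'.head_sign
        rw [hm] at this; simpa using this
      rw [nzf_cons_nz hc, hm, chg_cons_cons, chg_cons_cons, ih, hm]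
      rcases (sign_transfer h hdx) with ⟨h1, h2⟩
      by_cases hcd : c * d < 0
      · rw [if_pos hcd, if_pos (h1 hcd)]
      · rw [if_neg hcd, if_neg (fun hh => hcd (h2 hh))]
  | @cons_z x y hxy s l h' ih =>
      rw [nzf_cons_zero, ← ih, chg_cons_cons, if_neg (by linarith [hxy]), Nat.zero_add]



/-- Sign sequence to the left of `α`, built top-down from the `n`-th derivative. -/
noncomputable def Msgn (G : ℕ → ℝ) (n : ℕ) : ℕ → ℝ
  | 0 => G n
  | k+1 => if G (n - (k+1)) = 0 then -(Msgn G n k) else G (n - (k+1))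

/-- Sign sequence to the right of `α`. -/
noncomputable def MRsgn (G : ℕ → ℝ) (n : ℕ) : ℕ → ℝ
  | 0 => G n
  | k+1 => if G (n - (k+1)) = 0 then MRsgn G n k else G (n - (k+1))

lemma Msgn_z {G : ℕ → ℝ} {n i : ℕ} (hi : i < n) (h0 : G i = 0) :
    Msgn G n (n - i) = -(Msgn G n (n - (i+1))) := by
  rw [show n - i = (n - (i+1)) + 1 from by omega]
  simp only [Msgn]
  rw [show n - (n - (i+1) + 1) = i from by omega, if_pos h0]

lemma Msgn_nz {G : ℕ → ℝ} {n i : ℕ} (hi : i < n) (h0 : G i ≠ 0) :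
    Msgn G n (n - i) = G i := by
  rw [show n - i = (n - (i+1)) + 1 from by omega]
  simp only [Msgn]
  rw [show n - (n - (i+1) + 1) = i from by omega, if_neg h0]

lemma MRsgn_z {G : ℕ → ℝ} {n i : ℕ} (hi : i < n) (h0 : G i = 0) :
    MRsgn G n (n - i) = MRsgn G n (n - (i+1)) := by
  rw [show n - i = (n - (i+1)) + 1 from by omega]
  simp only [MRsgn]
  rw [show n - (n - (i+1) + 1) = i from by omega, if_pos h0]

lemma MRsgn_nz {G : ℕ → ℝ} {n i : ℕ} (hi : i < n) (h0 : G i ≠ 0) :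
    MRsgn G n (n - i) = G i := by
  rw [show n - i = (n - (i+1)) + 1 from by omega]
  simp only [MRsgn]
  rw [show n - (n - (i+1) + 1) = i from by omega, if_neg h0]

lemma lz_ge : ∀ (μ : ℕ) (l : List ℝ), (∀ i < μ, l[i]? = some 0) → μ ≤ lz l := by
  intro μ
  induction μ with
  | zero => intro l _; exact Nat.zero_le _
  | succ μ ih =>
    intro l h
    have h0 := h 0 (by omega)
    cases l with
    | nil => simp at h0
    | cons x t =>
      simp at h0
      subst h0
      have : μ ≤ lz t := ih t (fun i hi => by simpa using h (i+1) (by omega))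
      have e : lz ((0:ℝ) :: t) = lz t + 1 := by simp [lz]
      omega

lemma relL_ofFn : ∀ (m : ℕ) (S L : ℕ → ℝ), 0 < S m * L m →
    (∀ i < m, 0 < S i * L i ∨ (S i = 0 ∧ L i * L (i+1) < 0)) →
    RelL (List.ofFn fun i : Fin (m+1) => S (i:ℕ)) (List.ofFn fun i : Fin (m+1) => L (i:ℕ)) := by
  intro m
  induction m with
  | zero =>
    intro S L hlast _
    simpa [List.ofFn_succ] using RelL.single hlast
  | succ m ih =>
    intro S L hlast h
    have tail := ih (fun j => S (j+1)) (fun j => L (j+1)) (by simpa using hlast)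
        (fun i hi => by simpa using h (i+1) (by omega))
    rw [List.ofFn_succ, List.ofFn_succ (f := fun i : Fin (m+2) => L (i:ℕ))]
    simp only [Fin.val_succ, Fin.val_zero]
    rcases h 0 (by omega) with h0 | ⟨h0, h1⟩
    · exact RelL.cons_nz h0 tail
    · rw [h0]
      rw [List.ofFn_succ (f := fun i : Fin (m+1) => L ((i:ℕ)+1))]
      simp only [Fin.val_succ, Fin.val_zero]
      rw [List.ofFn_succ (f := fun i : Fin (m+1) => L ((i:ℕ)+1))] at tail
      simp only [Fin.val_succ, Fin.val_zero] at tail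
      exact RelL.cons_z h1 tail

lemma relR_ofFn : ∀ (m : ℕ) (S L : ℕ → ℝ), 0 < S m * L m →
    (∀ i < m, 0 < S i * L i ∨ (S i = 0 ∧ 0 < L i * L (i+1))) →
    RelR (List.ofFn fun i : Fin (m+1) => S (i:ℕ)) (List.ofFn fun i : Fin (m+1) => L (i:ℕ)) := by
  intro m
  induction m with
  | zero =>
    intro S L hlast _
    simpa [List.ofFn_succ] using RelR.single hlast
  | succ m ih =>
    intro S L hlast h
    have tail := ih (fun j => S (j+1)) (fun j => L (j+1)) (by simpa using hlast)
        (fun i hi => by simpa using h (i+1) (by omega))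
    rw [List.ofFn_succ, List.ofFn_succ (f := fun i : Fin (m+2) => L (i:ℕ))]
    simp only [Fin.val_succ, Fin.val_zero]
    rcases h 0 (by omega) with h0 | ⟨h0, h1⟩
    · exact RelR.cons_nz h0 tail
    · rw [h0]
      rw [List.ofFn_succ (f := fun i : Fin (m+1) => L ((i:ℕ)+1))]
      simp only [Fin.val_succ, Fin.val_zero]
      rw [List.ofFn_succ (f := fun i : Fin (m+1) => L ((i:ℕ)+1))] at tail
      simp only [Fin.val_succ, Fin.val_zero] at tail
      exact RelR.cons_z h1 tail

lemma neg_prod {A p q : ℝ} (h1 : 0 < -A * p) (h2 : 0 < A * q) : p * q < 0 := by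
  nlinarith [mul_pos h1 h2, sq_nonneg A]

lemma pos_prod {A p q : ℝ} (h1 : 0 < A * p) (h2 : 0 < A * q) : 0 < p * q := by
  nlinarith [mul_pos h1 h2, sq_nonneg A]

/-- Local behavior at a zero (Claim 2): if `f` is `n` times differentiable on `[a, b]`
with `f⁽ⁿ⁾` never vanishing and of constant sign, and `α ∈ [a, b]` is a zero of `f` of
multiplicity `μ` (so `μ < n`), then for all `u, v ∈ [a, b]` sufficiently close to `α`
with `u < α ≤ v`, the sum of multiplicities of the zeros of `f` in `[u, v]` equals `μ`
and `v(f, u, n) ≥ v(f, v, n) + μ`. -/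
theorem claim_two (f : ℝ → ℝ) (a b : ℝ) (hab : a ≤ b) (n : ℕ)
    (hdiff : ∀ i < n, ∀ x ∈ Set.Icc a b,
      DifferentiableWithinAt ℝ (iteratedDerivWithin i f (Set.Icc a b)) (Set.Icc a b) x)
    (hne : ∀ x ∈ Set.Icc a b, iteratedDerivWithin n f (Set.Icc a b) x ≠ 0)
    (hsign : (∀ x ∈ Set.Icc a b, 0 < iteratedDerivWithin n f (Set.Icc a b) x) ∨
             (∀ x ∈ Set.Icc a b, iteratedDerivWithin n f (Set.Icc a b) x < 0))
    (α : ℝ) (hα : α ∈ Set.Icc a b) (hfα : f α = 0) (μ : ℕ) (hμn : μ < n)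
    (hzero : ∀ i < μ, iteratedDerivWithin i f (Set.Icc a b) α = 0)
    (hmult : iteratedDerivWithin μ f (Set.Icc a b) α ≠ 0) :
    ∃ η > (0 : ℝ), ∀ u ∈ Set.Icc a b, ∀ v ∈ Set.Icc a b,
      α - η < u → u < α → α ≤ v → v < α + η →
      (∃ (Z : Finset ℝ) (m : ℝ → ℕ),
        (∀ x : ℝ, x ∈ Z ↔ x ∈ Set.Icc u v ∧ f x = 0) ∧
        (∀ x ∈ Z, (∀ i < m x, iteratedDerivWithin i f (Set.Icc a b) x = 0) ∧
          iteratedDerivWithin (m x) f (Set.Icc a b) x ≠ 0) ∧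
        ∑ x ∈ Z, m x = μ) ∧
      vF n f (Set.Icc a b) v + μ ≤ vF n f (Set.Icc a b) u := by
  classical
  rcases eq_or_lt_of_le hab with rfl | hab'
  · refine ⟨1, one_pos, ?_⟩
    intro u hu v hv _ h2 _ _
    have : α ≤ u := hα.2.trans hu.1
    linarith
  have huniq : UniqueDiffOn ℝ (Set.Icc a b) := uniqueDiffOn_Icc hab'
  have hcont : ∀ i < n, ContinuousOn (iteratedDerivWithin i f (Set.Icc a b)) (Set.Icc a b) :=
    fun i hi x hx => (hdiff i hi x hx).continuousWithinAt
  have hderiv : ∀ i < n, ∀ x ∈ Set.Ioo a b,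
      HasDerivAt (iteratedDerivWithin i f (Set.Icc a b))
        (iteratedDerivWithin (i+1) f (Set.Icc a b) x) x := by
    intro i hi x hx
    have hxs : x ∈ Set.Icc a b := Set.Ioo_subset_Icc_self hx
    have h1 := (hdiff i hi x hxs).hasDerivWithinAt
    rw [iteratedDerivWithin_succ]
    exact h1.hasDerivAt (Icc_mem_nhds hx.1 hx.2)
  have hMVT : ∀ i < n, ∀ x y : ℝ, a ≤ x → y ≤ b → x < y →
      ∃ ξ ∈ Set.Ioo x y, iteratedDerivWithin (i+1) f (Set.Icc a b) ξ =
        (iteratedDerivWithin i f (Set.Icc a b) y - iteratedDerivWithin i f (Set.Icc a b) x)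
          / (y - x) := by
    intro i hi x y hax hyb hxy
    exact exists_hasDerivAt_eq_slope _ _ hxy
      ((hcont i hi).mono (Set.Icc_subset_Icc hax hyb))
      (fun z hz => hderiv i hi z (Set.Ioo_subset_Ioo hax hyb hz))
  have hwinE : ∀ i : ℕ, ∃ δ : ℝ, 0 < δ ∧ (i < n →
      iteratedDerivWithin i f (Set.Icc a b) α ≠ 0 →
      ∀ x ∈ Set.Icc a b, |x - α| < δ →
        0 < iteratedDerivWithin i f (Set.Icc a b) α * iteratedDerivWithin i f (Set.Icc a b) x) := by
    intro i
    by_cases hi : i < n ∧ iteratedDerivWithin i f (Set.Icc a b) α ≠ 0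
    · obtain ⟨hi1, hi2⟩ := hi
      have hc : ContinuousWithinAt (iteratedDerivWithin i f (Set.Icc a b)) (Set.Icc a b) α :=
        (hdiff i hi1 α hα).continuousWithinAt
      have hopen : IsOpen {y : ℝ | 0 < iteratedDerivWithin i f (Set.Icc a b) α * y} :=
        isOpen_lt continuous_const (continuous_const.mul continuous_id)
      have hmem : {y : ℝ | 0 < iteratedDerivWithin i f (Set.Icc a b) α * y} ∈
          nhds (iteratedDerivWithin i f (Set.Icc a b) α) :=
        hopen.mem_nhds (mul_self_pos.mpr hi2)
      have h2 := hc hmem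
      rw [Filter.mem_map, Metric.mem_nhdsWithin_iff] at h2
      obtain ⟨ε, hε, hsub⟩ := h2
      refine ⟨ε, hε, fun _ _ x hx hxd => ?_⟩
      exact hsub ⟨by rwa [Metric.mem_ball, Real.dist_eq], hx⟩
    · exact ⟨1, one_pos, fun h1 h2 => absurd ⟨h1, h2⟩ hi⟩
  choose δ hδpos hδ using hwinE
  have hrne : (Finset.range (n+1)).Nonempty := ⟨0, Finset.mem_range.mpr (by omega)⟩
  refine ⟨Finset.inf' (Finset.range (n+1)) hrne δ, ?_, ?_⟩
  · exact (Finset.lt_inf'_iff hrne).mpr (fun i _ => hδpos i)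
  set η := Finset.inf' (Finset.range (n+1)) hrne δ with hηdef
  have hηle : ∀ i, i ≤ n → η ≤ δ i :=
    fun i hi => Finset.inf'_le δ (Finset.mem_range.mpr (by omega))
  intro u hu v hv huη huα hαv hvη
  -- sign claims to the left and right of α
  have claimL : ∀ k, k ≤ n → ∀ x ∈ Set.Icc a b, α - η < x → x < α →
      0 < Msgn (fun j => iteratedDerivWithin j f (Set.Icc a b) α) n k *
        iteratedDerivWithin (n - k) f (Set.Icc a b) x := by
    intro k
    induction k with
    | zero =>
      intro _ x hx _ _
      simp only [Msgn, Nat.sub_zero]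
      rcases hsign with hs | hs
      · exact mul_pos (hs α hα) (hs x hx)
      · exact mul_pos_of_neg_of_neg (hs α hα) (hs x hx)
    | succ k ih =>
      intro hk x hx hx1 hx2
      have hin : n - (k+1) < n := by omega
      by_cases hGi : iteratedDerivWithin (n - (k+1)) f (Set.Icc a b) α = 0
      · obtain ⟨ξ, hξ, hslope⟩ := hMVT (n - (k+1)) hin x α hx.1 hα.2 hx2
        have hξs : ξ ∈ Set.Icc a b := ⟨hx.1.trans hξ.1.le, hξ.2.le.trans hα.2⟩
        have hIH := ih (by omega) ξ hξs (by linarith [hξ.1]) hξ.2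
        rw [show n - k = (n - (k+1)) + 1 from by omega] at hIH
        have hax : (0:ℝ) < α - x := by linarith
        have h3 : iteratedDerivWithin ((n - (k+1)) + 1) f (Set.Icc a b) ξ * (α - x) =
            iteratedDerivWithin (n - (k+1)) f (Set.Icc a b) α
              - iteratedDerivWithin (n - (k+1)) f (Set.Icc a b) x := by
          rw [hslope, div_mul_cancel₀ _ (ne_of_gt hax)]
        rw [hGi] at h3
        have hval : iteratedDerivWithin (n - (k+1)) f (Set.Icc a b) x =
            -(iteratedDerivWithin ((n - (k+1)) + 1) f (Set.Icc a b) ξ * (α - x)) := by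
          linarith
        simp only [Msgn, if_pos hGi]
        rw [hval]
        nlinarith [mul_pos hIH hax]
      · simp only [Msgn, if_neg hGi]
        have habs : |x - α| < δ (n - (k+1)) := by
          rw [abs_lt]
          have := hηle (n - (k+1)) (by omega)
          constructor <;> linarith
        exact hδ (n - (k+1)) hin hGi x hx habs
  have claimR : ∀ k, k ≤ n → ∀ x ∈ Set.Icc a b, α < x → x < α + η →
      0 < MRsgn (fun j => iteratedDerivWithin j f (Set.Icc a b) α) n k *
        iteratedDerivWithin (n - k) f (Set.Icc a b) x := by
    intro k
    induction k with
    | zero =>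
      intro _ x hx _ _
      simp only [MRsgn, Nat.sub_zero]
      rcases hsign with hs | hs
      · exact mul_pos (hs α hα) (hs x hx)
      · exact mul_pos_of_neg_of_neg (hs α hα) (hs x hx)
    | succ k ih =>
      intro hk x hx hx1 hx2
      have hin : n - (k+1) < n := by omega
      by_cases hGi : iteratedDerivWithin (n - (k+1)) f (Set.Icc a b) α = 0
      · obtain ⟨ξ, hξ, hslope⟩ := hMVT (n - (k+1)) hin α x hα.1 hx.2 hx1
        have hξs : ξ ∈ Set.Icc a b := ⟨hα.1.trans hξ.1.le, hξ.2.le.trans hx.2⟩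
        have hIH := ih (by omega) ξ hξs hξ.1 (by linarith [hξ.2])
        rw [show n - k = (n - (k+1)) + 1 from by omega] at hIH
        have hax : (0:ℝ) < x - α := by linarith
        have h3 : iteratedDerivWithin ((n - (k+1)) + 1) f (Set.Icc a b) ξ * (x - α) =
            iteratedDerivWithin (n - (k+1)) f (Set.Icc a b) x
              - iteratedDerivWithin (n - (k+1)) f (Set.Icc a b) α := by
          rw [hslope, div_mul_cancel₀ _ (ne_of_gt hax)]
        rw [hGi] at h3
        have hval : iteratedDerivWithin (n - (k+1)) f (Set.Icc a b) x =
            iteratedDerivWithin ((n - (k+1)) + 1) f (Set.Icc a b) ξ * (x - α) := by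
          linarith
        simp only [MRsgn, if_pos hGi]
        rw [hval]
        nlinarith [mul_pos hIH hax]
      · simp only [MRsgn, if_neg hGi]
        have habs : |x - α| < δ (n - (k+1)) := by
          rw [abs_lt]
          have := hηle (n - (k+1)) (by omega)
          constructor <;> linarith
        exact hδ (n - (k+1)) hin hGi x hx habs
  have husb : Set.Icc u v ⊆ Set.Icc a b := Set.Icc_subset_Icc hu.1 hv.2
  constructor
  · -- the zeros of f in [u, v] are exactly α with multiplicity μ
    refine ⟨{α}, fun _ => μ, ?_, ?_, ?_⟩
    · intro x
      simp only [Finset.mem_singleton]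
      constructor
      · rintro rfl; exact ⟨⟨huα.le, hαv⟩, hfα⟩
      · rintro ⟨hxuv, hfx⟩
        by_contra hxα
        have hxs : x ∈ Set.Icc a b := husb hxuv
        rcases lt_or_gt_of_ne hxα with hlt | hgt
        · have := claimL n le_rfl x hxs (by linarith [hxuv.1]) hlt
          rw [Nat.sub_self] at this
          simp [iteratedDerivWithin_zero, hfx] at this
        · have := claimR n le_rfl x hxs hgt (by linarith [hxuv.2])
          rw [Nat.sub_self] at this
          simp [iteratedDerivWithin_zero, hfx] at this
    · intro x hx
      rw [Finset.mem_singleton] at hx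
      subst hx
      exact ⟨hzero, hmult⟩
    · simp
  -- the sign-change inequality
  have hlastL : 0 < iteratedDerivWithin n f (Set.Icc a b) α *
      iteratedDerivWithin n f (Set.Icc a b) u := by
    have := claimL 0 (Nat.zero_le n) u hu (by linarith) huα
    simpa [Msgn] using this
  have hmidL : ∀ i < n,
      0 < iteratedDerivWithin i f (Set.Icc a b) α * iteratedDerivWithin i f (Set.Icc a b) u ∨
      (iteratedDerivWithin i f (Set.Icc a b) α = 0 ∧
        iteratedDerivWithin i f (Set.Icc a b) u * iteratedDerivWithin (i+1) f (Set.Icc a b) u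
          < 0) := by
    intro i hi
    have h1 := claimL (n - i) (by omega) u hu (by linarith) huα
    have h2 := claimL (n - (i+1)) (by omega) u hu (by linarith) huα
    rw [show n - (n - i) = i from by omega] at h1
    rw [show n - (n - (i+1)) = i + 1 from by omega] at h2
    by_cases hGi : iteratedDerivWithin i f (Set.Icc a b) α = 0
    · right
      refine ⟨hGi, ?_⟩
      rw [Msgn_z hi hGi] at h1
      exact neg_prod h1 h2
    · left
      rwa [Msgn_nz hi hGi] at h1
  have hRelL : RelL (List.ofFn fun i : Fin (n+1) => iteratedDerivWithin (i:ℕ) f (Set.Icc a b) α)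
      (List.ofFn fun i : Fin (n+1) => iteratedDerivWithin (i:ℕ) f (Set.Icc a b) u) :=
    relL_ofFn n _ _ hlastL hmidL
  have hvFu : vF n f (Set.Icc a b) u =
      chg (List.ofFn fun i : Fin (n+1) => iteratedDerivWithin (i:ℕ) f (Set.Icc a b) u) := by
    rw [show vF n f (Set.Icc a b) u = signChanges
        (List.ofFn fun i : Fin (n+1) => iteratedDerivWithin (i:ℕ) f (Set.Icc a b) u) from rfl,
      signChanges_eq_chg_nzf, nzf_eq_self hRelL.all_nz]
  have hlzSL : μ ≤ lz (List.ofFn fun i : Fin (n+1) =>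
      iteratedDerivWithin (i:ℕ) f (Set.Icc a b) α) := by
    apply lz_ge
    intro i hiμ
    rw [List.getElem?_ofFn]
    have hin : i < n + 1 := by omega
    simp only [List.ofFnNthVal, dif_pos hin]
    rw [hzero i hiμ]
  have hchgL := hRelL.chg_ge
  rcases eq_or_lt_of_le hαv with rfl | hαv'
  · -- v = α
    have hvFv : vF n f (Set.Icc a b) α =
        chg (nzf (List.ofFn fun i : Fin (n+1) =>
          iteratedDerivWithin (i:ℕ) f (Set.Icc a b) α)) := rfl
    rw [hvFv, hvFu]
    omega
  · -- α < v
    have hlastR : 0 < iteratedDerivWithin n f (Set.Icc a b) α *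
        iteratedDerivWithin n f (Set.Icc a b) v := by
      have := claimR 0 (Nat.zero_le n) v hv hαv' (by linarith)
      simpa [MRsgn] using this
    have hmidR : ∀ i < n,
        0 < iteratedDerivWithin i f (Set.Icc a b) α * iteratedDerivWithin i f (Set.Icc a b) v ∨
        (iteratedDerivWithin i f (Set.Icc a b) α = 0 ∧
          0 < iteratedDerivWithin i f (Set.Icc a b) v *
            iteratedDerivWithin (i+1) f (Set.Icc a b) v) := by
      intro i hi
      have h1 := claimR (n - i) (by omega) v hv hαv' (by linarith)
      have h2 := claimR (n - (i+1)) (by omega) v hv hαv' (by linarith)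
      rw [show n - (n - i) = i from by omega] at h1
      rw [show n - (n - (i+1)) = i + 1 from by omega] at h2
      by_cases hGi : iteratedDerivWithin i f (Set.Icc a b) α = 0
      · right
        refine ⟨hGi, ?_⟩
        rw [MRsgn_z hi hGi] at h1
        exact pos_prod h1 h2
      · left
        rwa [MRsgn_nz hi hGi] at h1
    have hRelR : RelR
        (List.ofFn fun i : Fin (n+1) => iteratedDerivWithin (i:ℕ) f (Set.Icc a b) α)
        (List.ofFn fun i : Fin (n+1) => iteratedDerivWithin (i:ℕ) f (Set.Icc a b) v) :=
      relR_ofFn n _ _ hlastR hmidR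
    have hvFv : vF n f (Set.Icc a b) v =
        chg (List.ofFn fun i : Fin (n+1) => iteratedDerivWithin (i:ℕ) f (Set.Icc a b) v) := by
      rw [show vF n f (Set.Icc a b) v = signChanges
          (List.ofFn fun i : Fin (n+1) => iteratedDerivWithin (i:ℕ) f (Set.Icc a b) v) from rfl,
        signChanges_eq_chg_nzf, nzf_eq_self hRelR.all_nz]
    rw [hvFv, hvFu, hRelR.chg_eq]
    omega
end
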